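/- arXiv:2303.15820 — 7 statements merged into one kernel-verified Lean document; each statement's English description precedes it below -/
import Mathlib

section
/- Suppose (I, {μ_z}_{z∈I}) is an adapted basis of 𝔥₀ and I = I₁ ∪ I₂ with I₁, I₂ disjoint and nonempty, such that μ_z(x)μ_{z'}(x) = 0 for all x ∈ Λ, z ∈ I₁ and z' ∈ I₂. Define Λ_j = {x ∈ Λ : μ_z(x) ≠ 0 for some z ∈ I_j} for j = 1, 2. Then Λ₁ and Λ₂ are disjoint and nonempty, Λ₀ = Λ₁ ∪ Λ₂, and (P₀)_{x,y} = 0 for all x ∈ Λ₁ and y ∈ Λ₂; in particular the matrix ((P₀)_{x,y})_{x,y∈Λ₀} is reducible. -/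
open scoped ComplexOrder

/-- A Hermitian matrix `M` indexed by `Λ`, restricted to a subset `S ⊆ Λ`, is *reducible*
if `S = S₁ ∪ S₂` for disjoint nonempty `S₁, S₂` with `M_{x,y} = 0` for all `x ∈ S₁`,
`y ∈ S₂`. -/
def MatrixReducibleOn {Λ : Type*} (S : Set Λ) (M : Matrix Λ Λ ℂ) : Prop :=
  ∃ S₁ S₂ : Set Λ, S₁ ∪ S₂ = S ∧ Disjoint S₁ S₂ ∧ S₁.Nonempty ∧ S₂.Nonempty ∧
    ∀ x ∈ S₁, ∀ y ∈ S₂, M x y = 0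

/-- Let `T` be a Hermitian positive semidefinite matrix on a nonempty finite set `Λ`,
`𝔥₀ = ker T`, `P₀` the orthogonal projection matrix onto `𝔥₀`, and
`Λ₀ = {x : (P₀)_{x,x} ≠ 0}`.  Suppose `(I, {μ_z}_{z∈I})` is an adapted basis of `𝔥₀`
and `I = I₁ ∪ I₂` with `I₁, I₂` disjoint nonempty such that `μ_z(x) μ_{z'}(x) = 0` for
all `x ∈ Λ`, `z ∈ I₁`, `z' ∈ I₂`.  Define `Λ_j = {x : μ_z(x) ≠ 0 for some z ∈ I_j}`.
Then `Λ₁`, `Λ₂` are disjoint and nonempty, `Λ₀ = Λ₁ ∪ Λ₂`, and `(P₀)_{x,y} = 0` for all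
`x ∈ Λ₁`, `y ∈ Λ₂`; in particular `((P₀)_{x,y})_{x,y∈Λ₀}` is reducible. -/
theorem reducible_of_disconnected_adapted_basis {Λ : Type*} [Fintype Λ] [DecidableEq Λ]
    [Nonempty Λ] (T : Matrix Λ Λ ℂ) (hT : T.PosSemidef)
    (h0 : Submodule ℂ (Λ → ℂ)) (hh0 : h0 = LinearMap.ker T.mulVecLin)
    (P₀ : Matrix Λ Λ ℂ)
    (hH : P₀.conjTranspose = P₀) (hPP : P₀ * P₀ = P₀)
    (hmem : ∀ v : Λ → ℂ, P₀.mulVec v ∈ h0) (hfix : ∀ v ∈ h0, P₀.mulVec v = v)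
    (I : Finset Λ) (μ : Λ → (Λ → ℂ))
    (hcard : I.card = Module.finrank ℂ h0)
    (hbmem : ∀ z ∈ I, μ z ∈ h0)
    (hli : LinearIndependent ℂ (fun z : I => μ z))
    (hspan : Submodule.span ℂ (μ '' ↑I) = h0)
    (hdiag : ∀ z ∈ I, μ z z ≠ 0)
    (hoff : ∀ z ∈ I, ∀ z' ∈ I, z' ≠ z → μ z z' = 0)
    (I₁ I₂ : Finset Λ) (hI : I = I₁ ∪ I₂) (hIdisj : Disjoint I₁ I₂)
    (hI₁ : I₁.Nonempty) (hI₂ : I₂.Nonempty)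
    (hsep : ∀ x : Λ, ∀ z ∈ I₁, ∀ z' ∈ I₂, μ z x * μ z' x = 0) :
    Disjoint {x : Λ | ∃ z ∈ I₁, μ z x ≠ 0} {x : Λ | ∃ z ∈ I₂, μ z x ≠ 0} ∧
    {x : Λ | ∃ z ∈ I₁, μ z x ≠ 0}.Nonempty ∧
    {x : Λ | ∃ z ∈ I₂, μ z x ≠ 0}.Nonempty ∧
    {x : Λ | P₀ x x ≠ 0} =
      {x : Λ | ∃ z ∈ I₁, μ z x ≠ 0} ∪ {x : Λ | ∃ z ∈ I₂, μ z x ≠ 0} ∧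
    (∀ x ∈ {x : Λ | ∃ z ∈ I₁, μ z x ≠ 0}, ∀ y ∈ {x : Λ | ∃ z ∈ I₂, μ z x ≠ 0},
      P₀ x y = 0) ∧
    MatrixReducibleOn {x : Λ | P₀ x x ≠ 0} P₀ := by
  classical
  have hsym : ∀ x y, (starRingEnd ℂ) (P₀ y x) = P₀ x y := by
    intro x y
    have := congrFun (congrFun hH x) y
    simpa [Matrix.conjTranspose_apply] using this
  -- columns of P₀ lie in h0
  have hcol : ∀ x, (fun k => P₀ k x) ∈ h0 := by
    intro x
    have h1 : P₀.mulVec (Pi.single x 1) = fun k => P₀ k x := by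
      rw [Matrix.mulVec_single]; simp; rfl
    have := hmem (Pi.single x 1)
    rwa [h1] at this
  -- representation of elements of h0
  have hrep : ∀ v ∈ h0, ∃ c : Λ → ℂ, v = ∑ z ∈ I, c z • μ z := by
    intro v hv
    rw [← hspan] at hv
    obtain ⟨l, hlsupp, hl⟩ := (Finsupp.mem_span_image_iff_linearCombination ℂ).mp hv
    refine ⟨l, ?_⟩
    rw [← hl, Finsupp.linearCombination_apply, Finsupp.sum]
    refine Finset.sum_subset ?_ ?_
    · intro z hz
      exact Finset.mem_coe.mp ((Finsupp.mem_supported ℂ l).mp hlsupp (Finset.mem_coe.mpr hz))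
    · intro z _ hz
      rw [Finsupp.notMem_support_iff.mp hz, zero_smul]
  -- evaluation at points of I
  have heval : ∀ (c : Λ → ℂ) (w : Λ), w ∈ I →
      (∑ z ∈ I, c z • μ z) w = c w * μ w w := by
    intro c w hw
    rw [Finset.sum_apply]
    rw [Finset.sum_eq_single w (fun z hz hne => by
      simp [hoff z hz w hw (Ne.symm hne)]) (fun h => absurd hw h)]
    simp
  -- inner product of an h0 element with a column
  have hinn : ∀ u ∈ h0, ∀ w : Λ,
      ∑ x, (starRingEnd ℂ) (u x) * P₀ x w = (starRingEnd ℂ) (u w) := by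
    intro u hu w
    have : ∀ x, (starRingEnd ℂ) (u x) * P₀ x w = (starRingEnd ℂ) (P₀ w x * u x) := by
      intro x
      rw [map_mul, ← hsym x w, mul_comm]
    rw [Finset.sum_congr rfl (fun x _ => this x), ← map_sum]
    congr 1
    have := congrFun (hfix u hu) w
    simpa [Matrix.mulVec, dotProduct] using this
  -- orthogonality of the two families
  have honn : ∀ z ∈ I₁, ∀ v ∈ I₂, ∑ x, (starRingEnd ℂ) (μ z x) * μ v x = 0 := by
    intro z hz v hv
    refine Finset.sum_eq_zero fun x _ => ?_
    rcases mul_eq_zero.mp (hsep x z hz v hv) with h | h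
    · simp [h]
    · simp [h]
  have hz₁I : ∀ z ∈ I₁, z ∈ I := fun z hz => hI ▸ Finset.mem_union_left _ hz
  have hz₂I : ∀ z ∈ I₂, z ∈ I := fun z hz => hI ▸ Finset.mem_union_right _ hz
  -- μ v vanishes on Λ₁ for v ∈ I₂, and symmetrically
  have hv₂ : ∀ x ∈ {x : Λ | ∃ z ∈ I₁, μ z x ≠ 0}, ∀ v ∈ I₂, μ v x = 0 := by
    rintro x ⟨z, hz, hzx⟩ v hv
    rcases mul_eq_zero.mp (hsep x z hz v hv) with h | h
    · exact absurd h hzx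
    · exact h
  have hv₁ : ∀ y ∈ {x : Λ | ∃ z ∈ I₂, μ z x ≠ 0}, ∀ z ∈ I₁, μ z y = 0 := by
    rintro y ⟨v, hv, hvy⟩ z hz
    rcases mul_eq_zero.mp (hsep y z hz v hv) with h | h
    · exact h
    · exact absurd h hvy
  have hdisjΛ : Disjoint {x : Λ | ∃ z ∈ I₁, μ z x ≠ 0} {x : Λ | ∃ z ∈ I₂, μ z x ≠ 0} := by
    rw [Set.disjoint_left]
    rintro x hx1 ⟨v, hv, hvx⟩
    exact hvx (hv₂ x hx1 v hv)
  -- key step B: P₀ x w = 0 for x ∈ Λ₁, w ∈ I₂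
  have keyB : ∀ w ∈ I₂, ∀ x ∈ {x : Λ | ∃ z ∈ I₁, μ z x ≠ 0}, P₀ x w = 0 := by
    intro w hw
    obtain ⟨c, hc⟩ := hrep (fun k => P₀ k w) (hcol w)
    rw [hI, Finset.sum_union hIdisj] at hc
    set u₁ : Λ → ℂ := ∑ z ∈ I₁, c z • μ z with hu₁def
    set u₂ : Λ → ℂ := ∑ z ∈ I₂, c z • μ z with hu₂def
    have hsplit : ∀ k, P₀ k w = u₁ k + u₂ k := by
      intro k
      have := congrFun hc k
      simpa using this
    have hzu₂ : ∀ z ∈ I₁, ∑ x, (starRingEnd ℂ) (μ z x) * u₂ x = 0 := by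
      intro z hz
      have : ∀ x, (starRingEnd ℂ) (μ z x) * u₂ x
          = ∑ v ∈ I₂, c v * ((starRingEnd ℂ) (μ z x) * μ v x) := by
        intro x
        rw [hu₂def, Finset.sum_apply, Finset.mul_sum]
        exact Finset.sum_congr rfl fun v _ => by simp; ring
      rw [Finset.sum_congr rfl (fun x _ => this x), Finset.sum_comm]
      refine Finset.sum_eq_zero fun v hv => ?_
      rw [← Finset.mul_sum, honn z hz v hv, mul_zero]
    have hzu₁ : ∀ z ∈ I₁, ∑ x, (starRingEnd ℂ) (μ z x) * u₁ x = 0 := by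
      intro z hz
      have h1 : ∑ x, (starRingEnd ℂ) (μ z x) * P₀ x w = 0 := by
        rw [hinn (μ z) (hbmem z (hz₁I z hz)) w]
        have hwz : w ≠ z := fun h => Finset.disjoint_left.mp hIdisj hz (h ▸ hw)
        rw [hoff z (hz₁I z hz) w (hz₂I w hw) hwz, map_zero]
      have h2 : ∑ x, (starRingEnd ℂ) (μ z x) * P₀ x w
          = (∑ x, (starRingEnd ℂ) (μ z x) * u₁ x) + ∑ x, (starRingEnd ℂ) (μ z x) * u₂ x := by
        rw [← Finset.sum_add_distrib]
        exact Finset.sum_congr rfl fun x _ => by rw [hsplit x, mul_add]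
      have := h2 ▸ h1
      rw [hzu₂ z hz, add_zero] at this
      exact this
    have hu₁ : u₁ = 0 := by
      have hself : ∑ x, (starRingEnd ℂ) (u₁ x) * u₁ x = 0 := by
        have : ∀ x, (starRingEnd ℂ) (u₁ x) * u₁ x
            = ∑ z ∈ I₁, (starRingEnd ℂ) (c z) * ((starRingEnd ℂ) (μ z x) * u₁ x) := by
          intro x
          rw [hu₁def, Finset.sum_apply, map_sum, Finset.sum_mul]
          exact Finset.sum_congr rfl fun z _ => by simp; ring
        rw [Finset.sum_congr rfl (fun x _ => this x), Finset.sum_comm]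
        refine Finset.sum_eq_zero fun z hz => ?_
        rw [← Finset.mul_sum, hzu₁ z hz, mul_zero]
      have hre : ∑ x, (Complex.normSq (u₁ x) : ℝ) = 0 := by
        have : ((∑ x, (Complex.normSq (u₁ x) : ℝ) : ℝ) : ℂ) = 0 := by
          push_cast
          rw [← hself]
          exact Finset.sum_congr rfl fun x _ => (Complex.normSq_eq_conj_mul_self).symm ▸ rfl
        exact_mod_cast this
      funext x
      have := (Finset.sum_eq_zero_iff_of_nonneg
        (fun x _ => Complex.normSq_nonneg (u₁ x))).mp hre x (Finset.mem_univ x)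
      exact Complex.normSq_eq_zero.mp this
    rintro x hx
    rw [hsplit x, hu₁]
    simp only [Pi.zero_apply, zero_add, hu₂def, Finset.sum_apply]
    refine Finset.sum_eq_zero fun v hv => ?_
    simp [hv₂ x hx v hv]
  -- key step C: P₀ x y = 0 for x ∈ Λ₁, y ∈ Λ₂
  have keyC : ∀ x ∈ {x : Λ | ∃ z ∈ I₁, μ z x ≠ 0}, ∀ y ∈ {x : Λ | ∃ z ∈ I₂, μ z x ≠ 0},
      P₀ x y = 0 := by
    intro x hx y hy
    obtain ⟨d, hd⟩ := hrep (fun k => P₀ k x) (hcol x)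
    have hd₂ : ∀ w ∈ I₂, d w = 0 := by
      intro w hw
      have h1 : P₀ w x = d w * μ w w := by
        have := congrFun hd w
        rw [this, heval d w (hz₂I w hw)]
      have h2 : P₀ w x = 0 := by
        rw [← hsym w x, keyB w hw x hx, map_zero]
      rcases mul_eq_zero.mp (h1 ▸ h2) with h | h
      · exact h
      · exact absurd h (hdiag w (hz₂I w hw))
    have hPyx : P₀ y x = 0 := by
      have := congrFun hd y
      rw [this, hI, Finset.sum_union hIdisj]
      simp only [Pi.add_apply, Finset.sum_apply]
      have e1 : ∑ z ∈ I₁, (d z • μ z) y = 0 :=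
        Finset.sum_eq_zero fun z hz => by simp [hv₁ y hy z hz]
      have e2 : ∑ z ∈ I₂, (d z • μ z) y = 0 :=
        Finset.sum_eq_zero fun z hz => by simp [hd₂ z hz]
      rw [e1, e2, add_zero]
    rw [← hsym x y, hPyx, map_zero]
  -- Λ₀ = Λ₁ ∪ Λ₂
  have hΛ₀ : {x : Λ | P₀ x x ≠ 0} =
      {x : Λ | ∃ z ∈ I₁, μ z x ≠ 0} ∪ {x : Λ | ∃ z ∈ I₂, μ z x ≠ 0} := by
    ext x
    simp only [Set.mem_setOf_eq, Set.mem_union]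
    constructor
    · intro hP
      obtain ⟨c, hc⟩ := hrep (fun k => P₀ k x) (hcol x)
      by_contra hcon
      push_neg at hcon
      apply hP
      have := congrFun hc x
      rw [this, hI, Finset.sum_union hIdisj]
      simp only [Pi.add_apply, Finset.sum_apply]
      rw [Finset.sum_eq_zero fun z hz => by simp [hcon.1 z hz],
        Finset.sum_eq_zero fun z hz => by simp [hcon.2 z hz], add_zero]
    · intro hx
      obtain ⟨z, hzI, hzx⟩ : ∃ z ∈ I, μ z x ≠ 0 := by
        rcases hx with ⟨z, hz, hzx⟩ | ⟨z, hz, hzx⟩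
        · exact ⟨z, hz₁I z hz, hzx⟩
        · exact ⟨z, hz₂I z hz, hzx⟩
      intro hP
      -- P₀ x x = ∑ normSq of column
      have hdiagsum : P₀ x x = ∑ k, ((Complex.normSq (P₀ k x) : ℝ) : ℂ) := by
        conv_lhs => rw [← hPP]
        rw [Matrix.mul_apply]
        refine Finset.sum_congr rfl fun k _ => ?_
        rw [← hsym x k, Complex.normSq_eq_conj_mul_self]
      have hre : ∑ k, (Complex.normSq (P₀ k x) : ℝ) = 0 := by
        have : ((∑ k, (Complex.normSq (P₀ k x) : ℝ) : ℝ) : ℂ) = 0 := by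
          push_cast
          rw [← hdiagsum, hP]
        exact_mod_cast this
      have hcolzero : ∀ k, P₀ k x = 0 := by
        intro k
        have := (Finset.sum_eq_zero_iff_of_nonneg
          (fun k _ => Complex.normSq_nonneg (P₀ k x))).mp hre k (Finset.mem_univ k)
        exact Complex.normSq_eq_zero.mp this
      apply hzx
      have := congrFun (hfix (μ z) (hbmem z hzI)) x
      rw [← this]
      simp only [Matrix.mulVec, dotProduct]
      refine Finset.sum_eq_zero fun k _ => ?_
      rw [← hsym x k, hcolzero k, map_zero, zero_mul]
  -- nonemptiness
  have hne₁ : {x : Λ | ∃ z ∈ I₁, μ z x ≠ 0}.Nonempty := by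
    obtain ⟨z, hz⟩ := hI₁
    exact ⟨z, z, hz, hdiag z (hz₁I z hz)⟩
  have hne₂ : {x : Λ | ∃ z ∈ I₂, μ z x ≠ 0}.Nonempty := by
    obtain ⟨z, hz⟩ := hI₂
    exact ⟨z, z, hz, hdiag z (hz₂I z hz)⟩
  exact ⟨hdisjΛ, hne₁, hne₂, hΛ₀, keyC,
    ⟨_, _, hΛ₀.symm, hdisjΛ, hne₁, hne₂, keyC⟩⟩
end

section
/- Let P be a matrix indexed by Λ with P² = P and P† = P, let Λ₀ = {x ∈ Λ : P_{x,x} ≠ 0}, and suppose Λ₀ = Λ₁ ∪ Λ₂ with Λ₁, Λ₂ disjoint and P_{x,y} = 0 for all x ∈ Λ₁ and y ∈ Λ₂. Define matrices P₁, P₂ by (P_j)_{x,y} = P_{x,y} if x, y ∈ Λ_j and (P_j)_{x,y} = 0 otherwise (j = 1, 2). Then P₁ and P₂ each satisfy P_j² = P_j and P_j† = P_j, and moreover P = P₁ + P₂ and P₁P₂ = P₂P₁ = 0. -/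
/-- Let `P` be a matrix on a nonempty finite set `Λ` with `P² = P` and `P† = P`, let
`Λ₀ = {x : P_{x,x} ≠ 0}`, and suppose `Λ₀ = Λ₁ ∪ Λ₂` with `Λ₁, Λ₂` disjoint and
`P_{x,y} = 0` for all `x ∈ Λ₁`, `y ∈ Λ₂`.  Define `P_j` by `(P_j)_{x,y} = P_{x,y}` if
`x, y ∈ Λ_j` and `0` otherwise.  Then `P₁`, `P₂` are Hermitian idempotents,
`P = P₁ + P₂`, and `P₁ P₂ = P₂ P₁ = 0`. -/
theorem projection_splits {Λ : Type*} [Fintype Λ] [DecidableEq Λ] [Nonempty Λ]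
    (P : Matrix Λ Λ ℂ) (hPP : P * P = P) (hPH : P.conjTranspose = P)
    (Λ₁ Λ₂ : Set Λ) [DecidablePred (· ∈ Λ₁)] [DecidablePred (· ∈ Λ₂)]
    (hcover : {x : Λ | P x x ≠ 0} = Λ₁ ∪ Λ₂) (hdisj : Disjoint Λ₁ Λ₂)
    (hzero : ∀ x ∈ Λ₁, ∀ y ∈ Λ₂, P x y = 0) :
    ∀ (P₁ P₂ : Matrix Λ Λ ℂ),
      P₁ = (fun x y => if x ∈ Λ₁ ∧ y ∈ Λ₁ then P x y else 0) →
      P₂ = (fun x y => if x ∈ Λ₂ ∧ y ∈ Λ₂ then P x y else 0) →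
      P₁ * P₁ = P₁ ∧ P₁.conjTranspose = P₁ ∧
      P₂ * P₂ = P₂ ∧ P₂.conjTranspose = P₂ ∧
      P = P₁ + P₂ ∧ P₁ * P₂ = 0 ∧ P₂ * P₁ = 0 := by
  intro P₁ P₂ hP1 hP2
  -- hermiticity entrywise
  have herm : ∀ x y, P x y = star (P y x) := by
    intro x y
    conv_lhs => rw [← hPH]
    rfl
  -- if the diagonal entry vanishes, the whole row vanishes
  have rowzero : ∀ z, P z z = 0 → ∀ x, P z x = 0 := by
    intro z hz x
    have hsum : ∑ w, P z w * star (P z w) = 0 := by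
      have h := congrFun (congrFun hPP z) z
      rw [Matrix.mul_apply] at h
      calc ∑ w, P z w * star (P z w) = ∑ w, P z w * P w z :=
            Finset.sum_congr rfl fun w _ => by rw [herm w z]
        _ = P z z := h
        _ = 0 := hz
    have hsum' : ∑ w, Complex.normSq (P z w) = 0 := by
      have h2 := hsum
      simp only [Complex.star_def, Complex.mul_conj] at h2
      exact_mod_cast h2
    have := (Finset.sum_eq_zero_iff_of_nonneg
      (fun w _ => Complex.normSq_nonneg (P z w))).mp hsum' x (Finset.mem_univ x)
    exact Complex.normSq_eq_zero.mp this
  have colzero : ∀ z, P z z = 0 → ∀ x, P x z = 0 := by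
    intro z hz x
    rw [herm x z, rowzero z hz x, star_zero]
  -- diagonal vanishes outside Λ₁ ∪ Λ₂
  have hdiag : ∀ x, x ∉ Λ₁ → x ∉ Λ₂ → P x x = 0 := by
    intro x h1 h2
    by_contra h
    have : x ∈ Λ₁ ∪ Λ₂ := hcover ▸ h
    rcases this with h | h <;> tauto
  have hcross : ∀ x ∈ Λ₂, ∀ y ∈ Λ₁, P x y = 0 := by
    intro x hx y hy
    rw [herm x y, hzero y hy x hx, star_zero]
  have hd12 : ∀ x, x ∈ Λ₁ → x ∉ Λ₂ := fun x hx => Set.disjoint_left.mp hdisj hx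
  have hd21 : ∀ x, x ∈ Λ₂ → x ∉ Λ₁ := fun x hx => Set.disjoint_right.mp hdisj hx
  -- If x ∈ Λ₁ and z ∉ Λ₁ then P x z = 0; similarly for Λ₂.
  have key1 : ∀ x ∈ Λ₁, ∀ z, z ∉ Λ₁ → P x z = 0 := by
    intro x hx z hz
    by_cases hz2 : z ∈ Λ₂
    · exact hzero x hx z hz2
    · exact colzero z (hdiag z hz hz2) x
  have key1' : ∀ y ∈ Λ₁, ∀ z, z ∉ Λ₁ → P z y = 0 := by
    intro y hy z hz
    rw [herm z y, key1 y hy z hz, star_zero]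
  have key2 : ∀ x ∈ Λ₂, ∀ z, z ∉ Λ₂ → P x z = 0 := by
    intro x hx z hz
    by_cases hz1 : z ∈ Λ₁
    · exact hcross x hx z hz1
    · exact colzero z (hdiag z hz1 hz) x
  have key2' : ∀ y ∈ Λ₂, ∀ z, z ∉ Λ₂ → P z y = 0 := by
    intro y hy z hz
    rw [herm z y, key2 y hy z hz, star_zero]
  subst hP1 hP2
  refine ⟨?_, ?_, ?_, ?_, ?_, ?_, ?_⟩
  · ext x y
    erw [Matrix.mul_apply]
    by_cases hx : x ∈ Λ₁
    · by_cases hy : y ∈ Λ₁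
      · simp only [hx, hy, and_true, true_and, if_true]
        have := congrFun (congrFun hPP x) y
        rw [Matrix.mul_apply] at this
        rw [← this]
        refine Finset.sum_congr rfl fun z _ => ?_
        by_cases hz : z ∈ Λ₁
        · simp [hz]
        · simp [hz, key1 x hx z hz]
      · simp only [hy, and_false, if_false, mul_zero, Finset.sum_const_zero]
    · simp only [hx, false_and, if_false, zero_mul, Finset.sum_const_zero]
  · ext x y
    erw [Matrix.conjTranspose_apply]
    simp only [apply_ite star, star_zero]
    by_cases hxy : x ∈ Λ₁ ∧ y ∈ Λ₁
    · simp [hxy, hxy.1, hxy.2, (herm x y).symm]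
    · have hyx : ¬(y ∈ Λ₁ ∧ x ∈ Λ₁) := fun h => hxy ⟨h.2, h.1⟩
      simp [hxy, hyx]
  · ext x y
    erw [Matrix.mul_apply]
    by_cases hx : x ∈ Λ₂
    · by_cases hy : y ∈ Λ₂
      · simp only [hx, hy, and_true, true_and, if_true]
        have := congrFun (congrFun hPP x) y
        rw [Matrix.mul_apply] at this
        rw [← this]
        refine Finset.sum_congr rfl fun z _ => ?_
        by_cases hz : z ∈ Λ₂
        · simp [hz]
        · simp [hz, key2 x hx z hz]
      · simp only [hy, and_false, if_false, mul_zero, Finset.sum_const_zero]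
    · simp only [hx, false_and, if_false, zero_mul, Finset.sum_const_zero]
  · ext x y
    erw [Matrix.conjTranspose_apply]
    simp only [apply_ite star, star_zero]
    by_cases hxy : x ∈ Λ₂ ∧ y ∈ Λ₂
    · simp [hxy, hxy.1, hxy.2, (herm x y).symm]
    · have hyx : ¬(y ∈ Λ₂ ∧ x ∈ Λ₂) := fun h => hxy ⟨h.2, h.1⟩
      simp [hxy, hyx]
  · ext x y
    erw [Matrix.add_apply]
    by_cases hx1 : x ∈ Λ₁
    · by_cases hy1 : y ∈ Λ₁
      · simp [hx1, hy1, hd12 x hx1]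
      · simp [hy1, hd12 x hx1, key1 x hx1 y hy1]
    · by_cases hx2 : x ∈ Λ₂
      · by_cases hy2 : y ∈ Λ₂
        · simp [hx1, hx2, hy2]
        · simp [hx1, hy2, key2 x hx2 y hy2]
      · have hx0 := hdiag x hx1 hx2
        simp [hx1, hx2, rowzero x hx0 y]
  · ext x y
    erw [Matrix.mul_apply, Matrix.zero_apply]
    refine Finset.sum_eq_zero fun z _ => ?_
    by_cases hz : z ∈ Λ₁
    · simp [hd12 z hz]
    · simp [hz]
  · ext x y
    erw [Matrix.mul_apply, Matrix.zero_apply]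
    refine Finset.sum_eq_zero fun z _ => ?_
    by_cases hz : z ∈ Λ₂
    · simp [hd21 z hz]
    · simp [hz]
end

section
/- If the matrix ((P₀)_{x,y})_{x,y∈Λ₀} is reducible, then there exists an adapted basis (I, {μ_z}_{z∈I}) of 𝔥₀ together with a decomposition I = I₁ ∪ I₂ into disjoint nonempty subsets such that μ_z(x)μ_{z'}(x) = 0 for all x ∈ Λ, z ∈ I₁ and z' ∈ I₂; in particular this adapted basis is not connected. -/
open scoped ComplexOrder

/-- A family `{μ_z}_{z ∈ I}` of vectors in `ℂ^Λ` is *connected* if for all `z, z' ∈ I`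
there is a sequence `z = z₀, z₁, …, z_n = z'` in `I` with `μ_{z_{i-1}} ∼ μ_{z_i}` for
each `i`, where `μ ∼ ν` means `μ(x) ν(x) ≠ 0` for some `x ∈ Λ`. -/
def FamilyConnected {Λ : Type*} (I : Finset Λ) (μ : Λ → (Λ → ℂ)) : Prop :=
  ∀ z ∈ I, ∀ z' ∈ I,
    Relation.ReflTransGen (fun a b => a ∈ I ∧ b ∈ I ∧ ∃ x, μ a x * μ b x ≠ 0) z z'

set_option linter.unusedVariables false
set_option linter.unusedSectionVars false


theorem exists_adapted_aux {Λ : Type*} [Fintype Λ] [DecidableEq Λ] (n : ℕ) :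
    ∀ (W : Submodule ℂ (Λ → ℂ)), Module.finrank ℂ W = n →
    ∃ (I : Finset Λ) (μ : Λ → (Λ → ℂ)),
      I.card = n ∧
      (∀ z ∈ I, μ z ∈ W) ∧
      Submodule.span ℂ (μ '' ↑I) = W ∧
      (∀ z ∈ I, μ z z = 1) ∧
      (∀ z ∈ I, ∀ z' ∈ I, z' ≠ z → μ z z' = 0) := by
  induction n with
  | zero =>
    intro W hW
    refine ⟨∅, fun _ => 0, by simp, by simp, ?_, by simp, by simp⟩
    rw [Submodule.finrank_eq_zero] at hW
    simp [hW]
  | succ n ih =>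
    intro W hW
    have hWne : W ≠ ⊥ := by
      intro h
      rw [h] at hW; simp at hW
    obtain ⟨v, hvW, hv0⟩ := Submodule.exists_mem_ne_zero_of_ne_bot hWne
    obtain ⟨x, hvx⟩ : ∃ x, v x ≠ 0 := by
      by_contra h
      push_neg at h
      exact hv0 (funext h)
    set u : Λ → ℂ := (v x)⁻¹ • v with hu
    have huW : u ∈ W := W.smul_mem _ hvW
    have hux : u x = 1 := by
      simp [hu, inv_mul_cancel₀ hvx]
    -- the evaluation functional on W
    set f : W →ₗ[ℂ] ℂ := (LinearMap.proj x).comp W.subtype with hf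
    have hfsurj : Function.Surjective f := by
      intro c
      refine ⟨c • ⟨u, huW⟩, ?_⟩
      simp [hf, hux]
    have hrange : LinearMap.range f = ⊤ := LinearMap.range_eq_top.mpr hfsurj
    set W' : Submodule ℂ (Λ → ℂ) := Submodule.map W.subtype (LinearMap.ker f) with hW'
    have hmemW' : ∀ w : Λ → ℂ, w ∈ W' ↔ w ∈ W ∧ w x = 0 := by
      intro w
      constructor
      · rintro ⟨⟨y, hy⟩, hyk, rfl⟩
        exact ⟨hy, by simpa [hf] using hyk⟩
      · rintro ⟨hw, hwx⟩
        exact ⟨⟨w, hw⟩, by simpa [hf] using hwx, rfl⟩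
    have hW'rank : Module.finrank ℂ W' = n := by
      have h1 := Submodule.finrank_map_subtype_eq W (LinearMap.ker f)
      rw [← hW'] at h1
      have h2 := LinearMap.finrank_range_add_finrank_ker f
      rw [hrange, finrank_top, hW] at h2
      rw [Module.finrank_self] at h2
      omega
    obtain ⟨I', μ', hcard', hmem', hspan', hdiag', hoff'⟩ := ih W' hW'rank
    have hW'le : W' ≤ W := Submodule.map_subtype_le W _
    have hxI' : x ∉ I' := by
      intro hx
      have h1 := hdiag' x hx
      have h2 := ((hmemW' (μ' x)).mp (hmem' x hx)).2
      rw [h2] at h1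
      exact one_ne_zero h1.symm
    set μ : Λ → (Λ → ℂ) := fun z => if z = x then u - ∑ z' ∈ I', u z' • μ' z' else μ' z with hμ
    have hμx : μ x = u - ∑ z' ∈ I', u z' • μ' z' := by simp [hμ]
    have hμz : ∀ z ∈ I', μ z = μ' z := by
      intro z hz
      have : z ≠ x := fun h => hxI' (h ▸ hz)
      simp [hμ, this]
    have hμ'x0 : ∀ z ∈ I', μ' z x = 0 := fun z hz => ((hmemW' (μ' z)).mp (hmem' z hz)).2
    refine ⟨insert x I', μ, ?_, ?_, ?_, ?_, ?_⟩
    · rw [Finset.card_insert_of_notMem hxI', hcard']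
    · intro z hz
      rcases Finset.mem_insert.mp hz with rfl | hz
      · rw [hμx]
        exact W.sub_mem huW (Submodule.sum_mem W (fun z' hz' => W.smul_mem _ (hW'le (hmem' z' hz'))))
      · rw [hμz z hz]
        exact hW'le (hmem' z hz)
    · apply le_antisymm
      · rw [Submodule.span_le]
        rintro w ⟨z, hz, rfl⟩
        rcases Finset.mem_insert.mp (by exact_mod_cast hz) with rfl | hz'
        · rw [hμx]
          exact W.sub_mem huW (Submodule.sum_mem W (fun z' hz' => W.smul_mem _ (hW'le (hmem' z' hz'))))
        · rw [hμz z hz']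
          exact hW'le (hmem' z hz')
      · intro w hw
        have hsub : ∀ z ∈ I', μ' z ∈ Submodule.span ℂ (μ '' ↑(insert x I')) := by
          intro z hz
          rw [← hμz z hz]
          exact Submodule.subset_span ⟨z, by simp [hz], rfl⟩
        have hW'sub : W' ≤ Submodule.span ℂ (μ '' ↑(insert x I')) := by
          rw [← hspan', Submodule.span_le]
          rintro w' ⟨z, hz, rfl⟩
          exact hsub z (by exact_mod_cast hz)
        have hμxspan : μ x ∈ Submodule.span ℂ (μ '' ↑(insert x I')) :=
          Submodule.subset_span ⟨x, by simp, rfl⟩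
        have huspan : u ∈ Submodule.span ℂ (μ '' ↑(insert x I')) := by
          have : u = μ x + ∑ z' ∈ I', u z' • μ' z' := by rw [hμx]; abel
          rw [this]
          exact Submodule.add_mem _ hμxspan
            (Submodule.sum_mem _ (fun z' hz' => Submodule.smul_mem _ _ (hsub z' hz')))
        have hdiff : w - w x • u ∈ W' := by
          rw [hmemW']
          refine ⟨W.sub_mem hw (W.smul_mem _ huW), ?_⟩
          simp [hux]
        have : w = (w - w x • u) + w x • u := by abel
        rw [this]
        exact Submodule.add_mem _ (hW'sub hdiff) (Submodule.smul_mem _ _ huspan)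
    · intro z hz
      rcases Finset.mem_insert.mp hz with rfl | hz'
      · rw [hμx]
        simp only [Pi.sub_apply, Finset.sum_apply, Pi.smul_apply, smul_eq_mul]
        rw [hux]
        have : ∀ z' ∈ I', u z' * μ' z' z = 0 := fun z' hz' => by rw [hμ'x0 z' hz', mul_zero]
        rw [Finset.sum_congr rfl this, Finset.sum_const_zero, sub_zero]
      · rw [hμz z hz']
        exact hdiag' z hz'
    · intro z hz z' hz' hne
      rcases Finset.mem_insert.mp hz with rfl | hzz
      · -- z = x, z' ∈ I'
        rcases Finset.mem_insert.mp hz' with rfl | hz'' 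
        · exact absurd rfl hne
        · rw [hμx]
          simp only [Pi.sub_apply, Finset.sum_apply, Pi.smul_apply, smul_eq_mul]
          rw [Finset.sum_eq_single z' (fun b hb hbne => by rw [hoff' b hb z' hz'' (Ne.symm hbne), mul_zero]) (fun h => absurd hz'' h)]
          rw [hdiag' z' hz'', mul_one, sub_self]
      · rcases Finset.mem_insert.mp hz' with rfl | hz''
        · rw [hμz z hzz]
          exact hμ'x0 z hzz
        · rw [hμz z hzz]
          exact hoff' z hzz z' hz'' hne


theorem adapted_linearIndependent {Λ : Type*} [DecidableEq Λ] (I : Finset Λ) (μ : Λ → (Λ → ℂ))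
    (hdiag : ∀ z ∈ I, μ z z ≠ 0)
    (hoff : ∀ z ∈ I, ∀ z' ∈ I, z' ≠ z → μ z z' = 0) :
    LinearIndependent ℂ (fun z : I => μ z) := by
  rw [linearIndependent_iff']
  intro s g hsum i hi
  have := congrFun hsum (i : Λ)
  simp only [Finset.sum_apply, Pi.smul_apply, smul_eq_mul, Pi.zero_apply] at this
  rw [Finset.sum_eq_single i (fun b hb hbne => by
      rw [hoff b.1 b.2 i.1 i.2 (fun h => hbne (Subtype.ext h.symm) : (i:Λ) ≠ (b:Λ)), mul_zero])
    (fun h => absurd hi h)] at this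
  exact (mul_eq_zero.mp this).resolve_right (hdiag i.1 i.2)

theorem proj_row_zero {Λ : Type*} [Fintype Λ] [DecidableEq Λ] (P₀ : Matrix Λ Λ ℂ)
    (hH : P₀.conjTranspose = P₀) (hPP : P₀ * P₀ = P₀) (x : Λ) (hx : P₀ x x = 0) :
    ∀ y, P₀ x y = 0 := by
  have key : P₀ x x = ∑ y, (Complex.normSq (P₀ x y) : ℂ) := by
    conv_lhs => rw [← hPP]
    rw [Matrix.mul_apply]
    apply Finset.sum_congr rfl
    intro y _
    have : P₀ y x = (starRingEnd ℂ) (P₀ x y) := by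
      conv_lhs => rw [← hH]
      rfl
    rw [this, Complex.mul_conj]
  rw [hx, ← Complex.ofReal_sum] at key
  have hsum : ∑ y, Complex.normSq (P₀ x y) = 0 := by exact_mod_cast key.symm
  intro y
  have := (Finset.sum_eq_zero_iff_of_nonneg (fun y _ => Complex.normSq_nonneg _)).mp hsum y
    (Finset.mem_univ y)
  exact Complex.normSq_eq_zero.mp this


noncomputable def coordSupport {Λ : Type*} (S : Set Λ) : Submodule ℂ (Λ → ℂ) where
  carrier := {v | ∀ x ∉ S, v x = 0}
  add_mem' := fun ha hb x hx => by simp [ha x hx, hb x hx]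
  zero_mem' := fun x _ => rfl
  smul_mem' := fun c a ha x hx => by simp [ha x hx]

theorem mem_coordSupport {Λ : Type*} {S : Set Λ} {v : Λ → ℂ} :
    v ∈ coordSupport S ↔ ∀ x ∉ S, v x = 0 := Iff.rfl

section Main
variable {Λ : Type*} [Fintype Λ] [DecidableEq Λ]
  (T : Matrix Λ Λ ℂ)
  (h0 : Submodule ℂ (Λ → ℂ))
  (P₀ : Matrix Λ Λ ℂ)
  (S₁ S₂ : Set Λ)

theorem main_thm
    (hH : P₀.conjTranspose = P₀) (hPP : P₀ * P₀ = P₀)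
    (hmem : ∀ v : Λ → ℂ, P₀.mulVec v ∈ h0) (hfix : ∀ v ∈ h0, P₀.mulVec v = v)
    (hrow : ∀ x, P₀ x x = 0 → ∀ y, P₀ x y = 0)
    (hunion : S₁ ∪ S₂ = {x : Λ | P₀ x x ≠ 0}) (hdisj : Disjoint S₁ S₂)
    (hzero : ∀ x ∈ S₁, ∀ y ∈ S₂, P₀ x y = 0) :
    (h0 ⊓ coordSupport S₁) ⊔ (h0 ⊓ coordSupport S₂) = h0 := by
  classical
  have hherm : ∀ x y, P₀ y x = (starRingEnd ℂ) (P₀ x y) := by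
    intro x y
    conv_lhs => rw [← hH]
    rfl
  have hzero' : ∀ x ∈ S₂, ∀ y ∈ S₁, P₀ x y = 0 := by
    intro x hx y hy
    rw [hherm y x, hzero y hy x hx, map_zero]
  apply le_antisymm
  · exact sup_le inf_le_left inf_le_left
  · intro v hv
    set v₁ : Λ → ℂ := P₀.mulVec (S₁.indicator v) with hv₁
    set v₂ : Λ → ℂ := P₀.mulVec (S₂.indicator v) with hv₂
    have key : ∀ (S S' : Set Λ), S = S₁ ∧ S' = S₂ ∨ S = S₂ ∧ S' = S₁ →
        (∀ x ∈ S, ∀ y ∈ S', P₀ x y = 0) →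
        P₀.mulVec (S.indicator v) ∈ h0 ⊓ coordSupport S := by
      intro S S' hSS hz
      refine ⟨hmem _, fun x hx => ?_⟩
      show ∑ y, P₀ x y * S.indicator v y = 0
      apply Finset.sum_eq_zero
      intro y _
      by_cases hy : y ∈ S
      · -- need P₀ x y = 0
        by_cases hxx : P₀ x x = 0
        · rw [hrow x hxx y, zero_mul]
        · have hxΛ : x ∈ S₁ ∪ S₂ := by rw [hunion]; exact hxx
          have hxS' : x ∈ S' := by
            rcases hSS with ⟨rfl, rfl⟩ | ⟨rfl, rfl⟩
            · rcases hxΛ with h | h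
              · exact absurd h hx
              · exact h
            · rcases hxΛ with h | h
              · exact h
              · exact absurd h hx
          have : P₀ y x = 0 := hz y hy x hxS'
          rw [hherm x y] at this
          rw [show P₀ x y = 0 from by
            have := congrArg (starRingEnd ℂ) this
            rwa [RingHom.map_zero, starRingEnd_self_apply] at this, zero_mul]
      · rw [Set.indicator_of_notMem hy, mul_zero]
    have h₁ : v₁ ∈ h0 ⊓ coordSupport S₁ := key S₁ S₂ (Or.inl ⟨rfl, rfl⟩) hzero
    have h₂ : v₂ ∈ h0 ⊓ coordSupport S₂ := key S₂ S₁ (Or.inr ⟨rfl, rfl⟩) hzero'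
    have hsum : v₁ + v₂ = v := by
      rw [hv₁, hv₂, ← Matrix.mulVec_add]
      have : P₀.mulVec (S₁.indicator v + S₂.indicator v) = P₀.mulVec v := by
        funext x
        show ∑ y, P₀ x y * (S₁.indicator v y + S₂.indicator v y) = ∑ y, P₀ x y * v y
        apply Finset.sum_congr rfl
        intro y _
        by_cases hy₁ : y ∈ S₁
        · rw [Set.indicator_of_mem hy₁, Set.indicator_of_notMem (Set.disjoint_left.mp hdisj hy₁),
            add_zero]
        · by_cases hy₂ : y ∈ S₂
          · rw [Set.indicator_of_mem hy₂, Set.indicator_of_notMem hy₁, zero_add]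
          · have hyy : P₀ y y = 0 := by
              by_contra h
              have : y ∈ S₁ ∪ S₂ := by rw [hunion]; exact h
              rcases this with h | h
              exacts [hy₁ h, hy₂ h]
            have : P₀ x y = 0 := by
              have h := hrow y hyy x
              rw [hherm x y] at h
              simpa using congrArg (starRingEnd ℂ) h
            rw [this, zero_mul, zero_mul]
      rw [this]
      exact hfix v hv
    rw [← hsum]
    exact Submodule.add_mem _ (Submodule.mem_sup_left h₁) (Submodule.mem_sup_right h₂)
end Main


/-- Let `T` be a Hermitian positive semidefinite matrix on a nonempty finite set `Λ`,
`𝔥₀ = ker T` with `dim 𝔥₀ = D₀ ≥ 1`, `P₀` the orthogonal projection matrix onto `𝔥₀`,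
and `Λ₀ = {x : (P₀)_{x,x} ≠ 0}`.  If `((P₀)_{x,y})_{x,y∈Λ₀}` is reducible, then there is
an adapted basis `(I, {μ_z}_{z∈I})` of `𝔥₀` together with a decomposition `I = I₁ ∪ I₂`
into disjoint nonempty subsets such that `μ_z(x) μ_{z'}(x) = 0` for all `x ∈ Λ`,
`z ∈ I₁`, `z' ∈ I₂`; in particular this adapted basis is not connected. -/
theorem disconnected_adapted_basis_of_reducible {Λ : Type*} [Fintype Λ] [DecidableEq Λ]
    [Nonempty Λ] (T : Matrix Λ Λ ℂ) (hT : T.PosSemidef)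
    (h0 : Submodule ℂ (Λ → ℂ)) (hh0 : h0 = LinearMap.ker T.mulVecLin)
    (hD0pos : 1 ≤ Module.finrank ℂ h0)
    (P₀ : Matrix Λ Λ ℂ)
    (hH : P₀.conjTranspose = P₀) (hPP : P₀ * P₀ = P₀)
    (hmem : ∀ v : Λ → ℂ, P₀.mulVec v ∈ h0) (hfix : ∀ v ∈ h0, P₀.mulVec v = v)
    (hred : MatrixReducibleOn {x : Λ | P₀ x x ≠ 0} P₀) :
    ∃ (I : Finset Λ) (μ : Λ → (Λ → ℂ)) (I₁ I₂ : Finset Λ),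
      I.card = Module.finrank ℂ h0 ∧
      (∀ z ∈ I, μ z ∈ h0) ∧
      LinearIndependent ℂ (fun z : I => μ z) ∧
      Submodule.span ℂ (μ '' ↑I) = h0 ∧
      (∀ z ∈ I, μ z z ≠ 0) ∧
      (∀ z ∈ I, ∀ z' ∈ I, z' ≠ z → μ z z' = 0) ∧
      I = I₁ ∪ I₂ ∧ Disjoint I₁ I₂ ∧ I₁.Nonempty ∧ I₂.Nonempty ∧
      (∀ x : Λ, ∀ z ∈ I₁, ∀ z' ∈ I₂, μ z x * μ z' x = 0) ∧
      ¬ FamilyConnected I μ := by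
  classical
  obtain ⟨S₁, S₂, hunion, hdisj, hne₁, hne₂, hzero⟩ := hred
  have hrow : ∀ x, P₀ x x = 0 → ∀ y, P₀ x y = 0 := proj_row_zero P₀ hH hPP
  have hherm : ∀ x y, P₀ y x = (starRingEnd ℂ) (P₀ x y) := by
    intro x y
    conv_lhs => rw [← hH]
    rfl
  -- the two support submodules
  set W₁ : Submodule ℂ (Λ → ℂ) := h0 ⊓ coordSupport S₁ with hW₁
  set W₂ : Submodule ℂ (Λ → ℂ) := h0 ⊓ coordSupport S₂ with hW₂
  have hsup : W₁ ⊔ W₂ = h0 :=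
    main_thm h0 P₀ S₁ S₂ hH hPP hmem hfix hrow hunion hdisj hzero
  have hinf : W₁ ⊓ W₂ = ⊥ := by
    rw [eq_bot_iff]
    rintro v ⟨⟨-, hv₁⟩, ⟨-, hv₂⟩⟩
    have : v = 0 := by
      funext x
      by_cases hx : x ∈ S₁
      · exact hv₂ x (Set.disjoint_left.mp hdisj hx)
      · exact hv₁ x hx
    simp [this]
  have hrank : Module.finrank ℂ W₁ + Module.finrank ℂ W₂ = Module.finrank ℂ h0 := by
    have := Submodule.finrank_sup_add_finrank_inf_eq W₁ W₂
    rw [hsup, hinf, finrank_bot] at this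
    omega
  obtain ⟨I₁, μ₁, hcard₁, hmem₁, hspan₁, hdiag₁, hoff₁⟩ :=
    exists_adapted_aux (Module.finrank ℂ W₁) W₁ rfl
  obtain ⟨I₂, μ₂, hcard₂, hmem₂, hspan₂, hdiag₂, hoff₂⟩ :=
    exists_adapted_aux (Module.finrank ℂ W₂) W₂ rfl
  have hI₁S₁ : ∀ z ∈ I₁, z ∈ S₁ := by
    intro z hz
    by_contra h
    have := (hmem₁ z hz).2 z h
    rw [hdiag₁ z hz] at this
    exact one_ne_zero this
  have hI₂S₂ : ∀ z ∈ I₂, z ∈ S₂ := by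
    intro z hz
    by_contra h
    have := (hmem₂ z hz).2 z h
    rw [hdiag₂ z hz] at this
    exact one_ne_zero this
  have hIdisj : Disjoint I₁ I₂ := by
    rw [Finset.disjoint_left]
    intro z hz₁ hz₂
    exact Set.disjoint_left.mp hdisj (hI₁S₁ z hz₁) (hI₂S₂ z hz₂)
  set μ : Λ → (Λ → ℂ) := fun z => if z ∈ I₁ then μ₁ z else μ₂ z with hμ
  have hμ₁ : ∀ z ∈ I₁, μ z = μ₁ z := fun z hz => by simp [hμ, hz]
  have hμ₂ : ∀ z ∈ I₂, μ z = μ₂ z := fun z hz => by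
    simp [hμ, Finset.disjoint_right.mp hIdisj hz]
  -- nonemptiness of I₁, I₂
  have hWne : ∀ (S : Set Λ) (I : Finset Λ) (μ' : Λ → Λ → ℂ),
      Submodule.span ℂ (μ' '' ↑I) = h0 ⊓ coordSupport S →
      (∀ z ∈ S, ∀ x, x ∉ S → P₀ x z = 0) →
      (∀ z ∈ S, P₀ z z ≠ 0) → S.Nonempty → I.Nonempty := by
    intro S I μ' hspan hcolzero hPzz ⟨z, hz⟩
    rw [Finset.nonempty_iff_ne_empty]
    rintro rfl
    simp only [Finset.coe_empty, Set.image_empty, Submodule.span_empty] at hspan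
    set w : Λ → ℂ := P₀.mulVec (Pi.single z 1) with hw
    have hwv : ∀ y, w y = P₀ y z := by
      intro y
      rw [hw, Matrix.mulVec_single]
      exact mul_one _
    have hwW : w ∈ h0 ⊓ coordSupport S := by
      refine ⟨hmem _, fun x hx => ?_⟩
      rw [hwv x]
      exact hcolzero z hz x hx
    rw [← hspan] at hwW
    have hw0 : w = 0 := by simpa using hwW
    have hzz : P₀ z z ≠ 0 := hPzz z hz
    have := hwv z
    rw [hw0] at this
    exact hzz this.symm
  have hdiagP : ∀ z, z ∈ S₁ ∪ S₂ → P₀ z z ≠ 0 := fun z h => by rw [hunion] at h; exact h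
  have hcol₁ : ∀ z ∈ S₁, ∀ x, x ∉ S₁ → P₀ x z = 0 := by
    intro z hz x hx
    by_cases hxx : P₀ x x = 0
    · exact hrow x hxx z
    · have hxS₂ : x ∈ S₂ := by
        have : x ∈ S₁ ∪ S₂ := by rw [hunion]; exact hxx
        rcases this with h | h
        · exact absurd h hx
        · exact h
      have h := hzero z hz x hxS₂
      rw [hherm z x, h, map_zero]
  have hcol₂ : ∀ z ∈ S₂, ∀ x, x ∉ S₂ → P₀ x z = 0 := by
    intro z hz x hx
    by_cases hxx : P₀ x x = 0
    · exact hrow x hxx z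
    · have hxS₁ : x ∈ S₁ := by
        have : x ∈ S₁ ∪ S₂ := by rw [hunion]; exact hxx
        rcases this with h | h
        · exact h
        · exact absurd h hx
      exact hzero x hxS₁ z hz
  have hI₁ne : I₁.Nonempty :=
    hWne S₁ I₁ μ₁ hspan₁ hcol₁ (fun z hz => hdiagP z (Or.inl hz)) hne₁
  have hI₂ne : I₂.Nonempty :=
    hWne S₂ I₂ μ₂ hspan₂ hcol₂ (fun z hz => hdiagP z (Or.inr hz)) hne₂
  -- cross-product vanishing
  have hprod : ∀ x : Λ, ∀ z ∈ I₁, ∀ z' ∈ I₂, μ z x * μ z' x = 0 := by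
    intro x z hz z' hz'
    rw [hμ₁ z hz, hμ₂ z' hz']
    by_cases hx : x ∈ S₁
    · rw [(hmem₂ z' hz').2 x (Set.disjoint_left.mp hdisj hx), mul_zero]
    · rw [(hmem₁ z hz).2 x hx, zero_mul]
  -- off-diagonal vanishing
  have hoff : ∀ z ∈ I₁ ∪ I₂, ∀ z' ∈ I₁ ∪ I₂, z' ≠ z → μ z z' = 0 := by
    intro z hz z' hz' hne
    rcases Finset.mem_union.mp hz with h | h
    · rw [hμ₁ z h]
      rcases Finset.mem_union.mp hz' with h' | h'
      · exact hoff₁ z h z' h' hne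
      · exact (hmem₁ z h).2 z' (Set.disjoint_left.mp hdisj.symm (hI₂S₂ z' h'))
    · rw [hμ₂ z h]
      rcases Finset.mem_union.mp hz' with h' | h'
      · exact (hmem₂ z h).2 z' (Set.disjoint_left.mp hdisj (hI₁S₁ z' h'))
      · exact hoff₂ z h z' h' hne
  have hdiag : ∀ z ∈ I₁ ∪ I₂, μ z z ≠ 0 := by
    intro z hz
    rcases Finset.mem_union.mp hz with h | h
    · rw [hμ₁ z h, hdiag₁ z h]; exact one_ne_zero
    · rw [hμ₂ z h, hdiag₂ z h]; exact one_ne_zero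
  refine ⟨I₁ ∪ I₂, μ, I₁, I₂, ?_, ?_, ?_, ?_, hdiag, hoff, rfl, hIdisj, hI₁ne, hI₂ne, hprod, ?_⟩
  · rw [Finset.card_union_of_disjoint hIdisj, hcard₁, hcard₂, hrank]
  · intro z hz
    rcases Finset.mem_union.mp hz with h | h
    · rw [hμ₁ z h]; exact (hmem₁ z h).1
    · rw [hμ₂ z h]; exact (hmem₂ z h).1
  · exact adapted_linearIndependent _ _ hdiag hoff
  · have himg : μ '' ↑(I₁ ∪ I₂) = (μ₁ '' ↑I₁) ∪ (μ₂ '' ↑I₂) := by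
      rw [Finset.coe_union, Set.image_union]
      congr 1
      · exact Set.image_congr (fun z hz => hμ₁ z (by exact_mod_cast hz))
      · exact Set.image_congr (fun z hz => hμ₂ z (by exact_mod_cast hz))
    rw [himg, Submodule.span_union, hspan₁, hspan₂, hsup]
  · -- not connected
    intro hconn
    obtain ⟨z₁, hz₁⟩ := hI₁ne
    obtain ⟨z₂, hz₂⟩ := hI₂ne
    have h := hconn z₁ (Finset.mem_union_left _ hz₁) z₂ (Finset.mem_union_right _ hz₂)
    have hchain : z₂ ∈ I₁ := by
      clear hz₂
      induction h with
      | refl => exact hz₁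
      | tail hab hbc ih =>
        obtain ⟨hbI, hcI, x, hx⟩ := hbc
        rcases Finset.mem_union.mp hcI with h | h
        · exact h
        · exact absurd (hprod x _ ih _ h) hx
    exact Finset.disjoint_left.mp hIdisj hchain hz₂
end

section
/- For every adapted basis (I, {μ_z}_{z∈I}) of 𝔥₀, the matrix ((P₀)_{x,y})_{x,y∈Λ₀} is irreducible if and only if the family {μ_z}_{z∈I} is connected. -/
open scoped ComplexOrder

set_option linter.unusedSectionVars false
set_option linter.unusedVariables false
set_option maxHeartbeats 1000000

section AuxLemmas
open Matrix
variable {Λ : Type*} [Fintype Λ] [DecidableEq Λ]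

lemma aux_herm_entry {P : Matrix Λ Λ ℂ} (hH : Pᴴ = P) (x y : Λ) :
    P x y = star (P y x) := by
  conv_lhs => rw [← hH]
  rfl

lemma aux_dot_self_eq_zero {v : Λ → ℂ} (h : star v ⬝ᵥ v = 0) : v = 0 := by
  have h2 : ∑ x, Complex.normSq (v x) = 0 := by
    have : star v ⬝ᵥ v = ↑(∑ x, Complex.normSq (v x)) := by
      simp only [dotProduct, Pi.star_apply, Complex.ofReal_sum]
      refine Finset.sum_congr rfl fun x _ => ?_
      rw [mul_comm]; exact Complex.mul_conj (v x)
    rw [this] at h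
    exact_mod_cast h
  have := (Finset.sum_eq_zero_iff_of_nonneg
    (fun x _ => Complex.normSq_nonneg (v x))).1 h2
  funext x
  exact Complex.normSq_eq_zero.1 (this x (Finset.mem_univ x))

lemma aux_col_zero {P : Matrix Λ Λ ℂ} (hH : Pᴴ = P) (hPP : P * P = P) {x : Λ}
    (hx : P x x = 0) : ∀ y, P y x = 0 := by
  have key : ∑ y, Complex.normSq (P y x) = 0 := by
    have h1 : P x x = ↑(∑ y, Complex.normSq (P y x)) := by
      conv_lhs => rw [← hPP]
      simp only [Matrix.mul_apply, Complex.ofReal_sum]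
      refine Finset.sum_congr rfl fun y _ => ?_
      rw [aux_herm_entry hH x y, mul_comm]; exact Complex.mul_conj (P y x)
    rw [hx] at h1
    exact_mod_cast h1.symm
  intro y
  have := (Finset.sum_eq_zero_iff_of_nonneg
    (fun y _ => Complex.normSq_nonneg (P y x))).1 key
  exact Complex.normSq_eq_zero.1 (this y (Finset.mem_univ y))

lemma aux_adjoint_dot {P : Matrix Λ Λ ℂ} (hH : Pᴴ = P) (u v : Λ → ℂ) :
    star (P *ᵥ u) ⬝ᵥ v = star u ⬝ᵥ (P *ᵥ v) := by
  rw [star_mulVec, hH, dotProduct_mulVec]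

lemma aux_dot_sum_right (u : Λ → ℂ) (K : Finset Λ) (c : Λ → ℂ) (μ : Λ → Λ → ℂ) :
    u ⬝ᵥ (∑ z ∈ K, c z • μ z) = ∑ z ∈ K, c z * (u ⬝ᵥ μ z) := by
  simp only [dotProduct, Finset.sum_apply, Pi.smul_apply, smul_eq_mul,
    Finset.mul_sum]
  rw [Finset.sum_comm]
  refine Finset.sum_congr rfl fun z _ => Finset.sum_congr rfl fun y _ => by ring

lemma aux_star_single (x : Λ) : star (Pi.single x (1:ℂ) : Λ → ℂ) = Pi.single x 1 := by
  funext y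
  by_cases h : y = x <;> simp [Pi.single_apply, h]

end AuxLemmas

open Matrix

/-- **Lemma 3.**  Let `T` be a Hermitian positive semidefinite matrix on a nonempty
finite set `Λ`, `𝔥₀ = ker T` with `dim 𝔥₀ ≥ 1`, `P₀` the orthogonal projection matrix
onto `𝔥₀`, and `Λ₀ = {x : (P₀)_{x,x} ≠ 0}`.  For every adapted basis `(I, {μ_z}_{z∈I})`
of `𝔥₀`, the matrix `((P₀)_{x,y})_{x,y∈Λ₀}` is irreducible iff the family
`{μ_z}_{z∈I}` is connected. -/
theorem irreducible_iff_adapted_basis_connected {Λ : Type*} [Fintype Λ] [DecidableEq Λ]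
    [Nonempty Λ] (T : Matrix Λ Λ ℂ) (hT : T.PosSemidef)
    (h0 : Submodule ℂ (Λ → ℂ)) (hh0 : h0 = LinearMap.ker T.mulVecLin)
    (hD0pos : 1 ≤ Module.finrank ℂ h0)
    (P₀ : Matrix Λ Λ ℂ)
    (hH : P₀.conjTranspose = P₀) (hPP : P₀ * P₀ = P₀)
    (hmem : ∀ v : Λ → ℂ, P₀.mulVec v ∈ h0) (hfix : ∀ v ∈ h0, P₀.mulVec v = v)
    (I : Finset Λ) (μ : Λ → (Λ → ℂ))
    (hcard : I.card = Module.finrank ℂ h0)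
    (hbmem : ∀ z ∈ I, μ z ∈ h0)
    (hli : LinearIndependent ℂ (fun z : I => μ z))
    (hspan : Submodule.span ℂ (μ '' ↑I) = h0)
    (hdiag : ∀ z ∈ I, μ z z ≠ 0)
    (hoff : ∀ z ∈ I, ∀ z' ∈ I, z' ≠ z → μ z z' = 0) :
    ¬ MatrixReducibleOn {x : Λ | P₀ x x ≠ 0} P₀ ↔ FamilyConnected I μ := by
  classical
  set R : Λ → Λ → Prop := fun a b => a ∈ I ∧ b ∈ I ∧ ∃ x, μ a x * μ b x ≠ 0 with hR
  -- every vector of h0 vanishes where the diagonal of P₀ vanishes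
  have hvan0 : ∀ v ∈ h0, ∀ x, P₀ x x = 0 → v x = 0 := by
    intro v hv x hx
    have hcol := aux_col_zero hH hPP hx
    have hvx : v x = (P₀ *ᵥ v) x := by rw [hfix v hv]
    rw [hvx]
    simp only [Matrix.mulVec, dotProduct]
    refine Finset.sum_eq_zero fun y _ => ?_
    rw [aux_herm_entry hH x y, hcol y, star_zero, zero_mul]
  have hmemΛ₀ : ∀ v ∈ h0, ∀ x, v x ≠ 0 → P₀ x x ≠ 0 :=
    fun v hv x hvx hx => hvx (hvan0 v hv x hx)
  -- μ is injective on I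
  have hinj : ∀ a ∈ I, ∀ b ∈ I, μ a = μ b → a = b := by
    intro a ha b hb hab
    by_contra hne
    exact hdiag a ha ((congrFun hab a).trans (hoff b hb a ha hne))
  -- decomposition in the adapted basis
  have hdecomp : ∀ v ∈ h0, ∃ c : Λ → ℂ, v = ∑ z ∈ I, c z • μ z := by
    intro v hv
    have hv' : v ∈ Submodule.span ℂ (↑(I.image μ) : Set (Λ → ℂ)) := by
      rw [Finset.coe_image, hspan]; exact hv
    obtain ⟨f, -, hf⟩ := Submodule.mem_span_finset.1 hv'
    refine ⟨fun z => f (μ z), ?_⟩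
    rw [← hf, Finset.sum_image hinj]
  -- evaluation of combinations at points of I
  have heval : ∀ (c : Λ → ℂ), ∀ z' ∈ I, (∑ z ∈ I, c z • μ z) z' = c z' * μ z' z' := by
    intro c z' hz'
    rw [Finset.sum_apply]
    rw [Finset.sum_eq_single z' (fun z hz hne => by
        simp only [Pi.smul_apply, smul_eq_mul]
        rw [hoff z hz z' hz' (Ne.symm hne), mul_zero])
      (fun h => absurd hz' h)]
    rfl
  -- a vector of h0 vanishing on I is zero
  have hzeroI : ∀ v ∈ h0, (∀ z ∈ I, v z = 0) → v = 0 := by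
    intro v hv hvz
    obtain ⟨c, hc⟩ := hdecomp v hv
    have hc0 : ∀ z ∈ I, c z = 0 := by
      intro z hz
      have h1 := heval c z hz
      rw [← hc, hvz z hz] at h1
      rcases mul_eq_zero.1 h1.symm with h | h
      · exact h
      · exact absurd h (hdiag z hz)
    rw [hc]
    exact Finset.sum_eq_zero fun z hz => by rw [hc0 z hz, zero_smul]
  -- points of Λ₀ are in the support of some μ z
  have hexz : ∀ x, P₀ x x ≠ 0 → ∃ z ∈ I, μ z x ≠ 0 := by
    intro x hx
    by_contra hall
    push_neg at hall
    obtain ⟨c, hc⟩ := hdecomp (P₀ *ᵥ Pi.single x 1) (hmem _)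
    have h1 : (P₀ *ᵥ Pi.single x 1) x = P₀ x x := by
      rw [Matrix.mulVec_single]; exact mul_one _
    have h2 : (P₀ *ᵥ Pi.single x 1) x = 0 := by
      rw [hc, Finset.sum_apply]
      exact Finset.sum_eq_zero fun z hz => by
        simp only [Pi.smul_apply, smul_eq_mul]; rw [hall z hz, mul_zero]
    exact hx (h1 ▸ h2)
  -- indicator lemma
  have hindic : ∀ (A B : Set Λ), A ∪ B = {x : Λ | P₀ x x ≠ 0} → Disjoint A B →
      (∀ a ∈ A, ∀ b ∈ B, P₀ a b = 0) → ∀ v ∈ h0, B.indicator v ∈ h0 := by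
    intro A B hU hD hblk v hv
    have hkey : B.indicator v
        = ∑ x ∈ Finset.univ.filter (· ∈ B), v x • (P₀ *ᵥ Pi.single x 1) := by
      funext y
      rw [Finset.sum_apply]
      by_cases hy : y ∈ B
      · rw [Set.indicator_of_mem hy]
        have hv' : v y = ∑ x : Λ, P₀ y x * v x := by
          conv_lhs => rw [← hfix v hv]
          rfl
        rw [hv',
          ← Finset.sum_filter_add_sum_filter_not Finset.univ (· ∈ B) (fun x => P₀ y x * v x)]
        have h2 : ∑ x ∈ Finset.univ.filter (fun x => ¬ x ∈ B), P₀ y x * v x = 0 := by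
          refine Finset.sum_eq_zero fun x hx => ?_
          simp only [Finset.mem_filter] at hx
          by_cases hxA : x ∈ A
          · rw [aux_herm_entry hH y x, hblk x hxA y hy, star_zero, zero_mul]
          · have hxΛ : x ∉ ({x : Λ | P₀ x x ≠ 0} : Set Λ) := by
              rw [← hU]; rintro (h | h); exacts [hxA h, hx.2 h]
            have hxx : P₀ x x = 0 := not_not.1 hxΛ
            rw [hvan0 v hv x hxx, mul_zero]
        rw [h2, add_zero]
        refine Finset.sum_congr rfl fun x hx => ?_
        simp only [Pi.smul_apply, smul_eq_mul, Matrix.mulVec_single_one, Matrix.col_apply, mul_one]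
        ring
      · rw [Set.indicator_of_notMem hy]
        refine (Finset.sum_eq_zero fun x hx => ?_).symm
        simp only [Finset.mem_filter] at hx
        have hyx : P₀ y x = 0 := by
          by_cases hyA : y ∈ A
          · exact hblk y hyA x hx.2
          · have hyΛ : y ∉ ({x : Λ | P₀ x x ≠ 0} : Set Λ) := by
              rw [← hU]; rintro (h | h); exacts [hyA h, hy h]
            have hyy : P₀ y y = 0 := not_not.1 hyΛ
            rw [aux_herm_entry hH y x, aux_col_zero hH hPP hyy x, star_zero]
        simp only [Pi.smul_apply, smul_eq_mul, Matrix.mulVec_single_one, Matrix.col_apply, mul_one, hyx, mul_zero]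
    rw [hkey]
    exact Submodule.sum_mem _ fun x _ => Submodule.smul_mem _ _ (hmem _)
  constructor
  · -- irreducible → connected
    intro hnred
    by_contra hnc
    apply hnred
    unfold FamilyConnected at hnc
    push_neg at hnc
    obtain ⟨z₀, hz₀, z₁, hz₁, hnch⟩ := hnc
    set S₁ : Set Λ := {x | ∃ z, z ∈ I ∧ Relation.ReflTransGen R z₀ z ∧ μ z x ≠ 0} with hS₁def
    have hS₁sub : S₁ ⊆ {x : Λ | P₀ x x ≠ 0} := by
      rintro x ⟨z, hzI, _, hμ⟩
      exact hmemΛ₀ (μ z) (hbmem z hzI) x hμ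
    refine ⟨S₁, {x : Λ | P₀ x x ≠ 0} \ S₁, Set.union_diff_cancel hS₁sub,
      Set.disjoint_sdiff_right, ⟨z₀, z₀, hz₀, Relation.ReflTransGen.refl, hdiag z₀ hz₀⟩,
      ⟨z₁, ?_, ?_⟩, ?_⟩
    · exact hmemΛ₀ (μ z₁) (hbmem z₁ hz₁) z₁ (hdiag z₁ hz₁)
    · rintro ⟨z, hzI, hch, hμ⟩
      have hzz : z₁ = z := by
        by_contra hne
        exact hμ (hoff z hzI z₁ hz₁ hne)
      exact hnch (hzz ▸ hch)
    · intro x hx y hy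
      -- the key block-vanishing computation
      have hS2supp : ∀ w ∈ S₁, ∀ z ∈ I, ¬ Relation.ReflTransGen R z₀ z → μ z w = 0 := by
        intro w hw z hz hnchz
        by_contra hμ
        obtain ⟨z', hz'I, hch', hμ'⟩ := hw
        exact hnchz (hch'.tail ⟨hz'I, hz, w, mul_ne_zero hμ' hμ⟩)
      obtain ⟨c, hc⟩ := hdecomp (P₀ *ᵥ Pi.single x 1) (hmem _)
      set u : Λ → ℂ := P₀ *ᵥ Pi.single x 1 with hu
      set v₁ : Λ → ℂ := ∑ z ∈ I.filter (fun z => Relation.ReflTransGen R z₀ z), c z • μ z with hv₁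
      set v₂ : Λ → ℂ := ∑ z ∈ I.filter (fun z => ¬ Relation.ReflTransGen R z₀ z), c z • μ z with hv₂
      have hsum : v₁ + v₂ = u := by
        rw [hv₁, hv₂, Finset.sum_filter_add_sum_filter_not, ← hc]
      have hipu : ∀ z ∈ I, star u ⬝ᵥ μ z = μ z x := by
        intro z hz
        rw [hu, aux_adjoint_dot hH, hfix _ (hbmem z hz), aux_star_single,
          single_dotProduct, one_mul]
      have hv₁supp : ∀ y', v₁ y' ≠ 0 → y' ∈ S₁ := by
        intro y' hy'
        by_contra hy'S
        apply hy'
        rw [hv₁, Finset.sum_apply]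
        refine Finset.sum_eq_zero fun z hz => ?_
        simp only [Finset.mem_filter] at hz
        simp only [Pi.smul_apply, smul_eq_mul]
        have : μ z y' = 0 := by
          by_contra hμ
          exact hy'S ⟨z, hz.1, hz.2, hμ⟩
        rw [this, mul_zero]
      have hv₂x : ∀ w ∈ S₁, v₂ w = 0 := by
        intro w hw
        rw [hv₂, Finset.sum_apply]
        refine Finset.sum_eq_zero fun z hz => ?_
        simp only [Finset.mem_filter] at hz
        simp only [Pi.smul_apply, smul_eq_mul]
        rw [hS2supp w hw z hz.1 hz.2, mul_zero]
      have hipuv₂ : star u ⬝ᵥ v₂ = 0 := by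
        rw [hv₂, aux_dot_sum_right]
        refine Finset.sum_eq_zero fun z hz => ?_
        simp only [Finset.mem_filter] at hz
        rw [hipu z hz.1, hS2supp x hx z hz.1 hz.2, mul_zero]
      have hipv₁v₂ : star v₁ ⬝ᵥ v₂ = 0 := by
        simp only [dotProduct, Pi.star_apply]
        refine Finset.sum_eq_zero fun y' _ => ?_
        by_cases h1 : v₁ y' = 0
        · rw [h1, star_zero, zero_mul]
        · rw [hv₂x y' (hv₁supp y' h1), mul_zero]
      have hv₂0 : v₂ = 0 := by
        apply aux_dot_self_eq_zero
        have : v₂ = u - v₁ := by rw [← hsum]; ring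
        rw [this, star_sub, sub_dotProduct, ← this, hipuv₂, hipv₁v₂, sub_zero]
      have huy : u y = 0 := by
        have : u = v₁ := by rw [← hsum, hv₂0, add_zero]
        rw [this]
        by_contra h
        exact hy.2 (hv₁supp y h)
      have hP₀yx : P₀ y x = 0 := by
        have : u y = P₀ y x := by rw [hu, Matrix.mulVec_single]; exact mul_one _
        rw [← this, huy]
      rw [aux_herm_entry hH x y, hP₀yx, star_zero]
  · -- connected → irreducible
    intro hconn
    rintro ⟨S₁, S₂, hU, hD, ⟨x₁, hx₁⟩, ⟨x₂, hx₂⟩, hblk⟩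
    have hblk' : ∀ y ∈ S₂, ∀ x ∈ S₁, P₀ y x = 0 := by
      intro y hy x hx
      rw [aux_herm_entry hH y x, hblk x hx y hy, star_zero]
    have hvan1 : ∀ z ∈ I, z ∈ S₁ → ∀ y ∈ S₂, μ z y = 0 := by
      intro z hz hzS1 y hy
      have hw : S₂.indicator (μ z) ∈ h0 := hindic S₁ S₂ hU hD hblk (μ z) (hbmem z hz)
      have h0' : S₂.indicator (μ z) = 0 := by
        refine hzeroI _ hw fun z' hz' => ?_
        by_cases h : z' ∈ S₂
        · rw [Set.indicator_of_mem h]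
          have hne : z' ≠ z := fun he => Set.disjoint_left.1 hD hzS1 (he ▸ h)
          exact hoff z hz z' hz' hne
        · exact Set.indicator_of_notMem h _
      have := congrFun h0' y
      rwa [Set.indicator_of_mem hy] at this
    have hvan2 : ∀ z ∈ I, z ∈ S₂ → ∀ y ∈ S₁, μ z y = 0 := by
      intro z hz hzS2 y hy
      have hU' : S₂ ∪ S₁ = {x : Λ | P₀ x x ≠ 0} := by rw [Set.union_comm]; exact hU
      have hw : S₁.indicator (μ z) ∈ h0 := hindic S₂ S₁ hU' hD.symm hblk' (μ z) (hbmem z hz)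
      have h0' : S₁.indicator (μ z) = 0 := by
        refine hzeroI _ hw fun z' hz' => ?_
        by_cases h : z' ∈ S₁
        · rw [Set.indicator_of_mem h]
          have hne : z' ≠ z := fun he => Set.disjoint_left.1 hD (he ▸ h) hzS2
          exact hoff z hz z' hz' hne
        · exact Set.indicator_of_notMem h _
      have := congrFun h0' y
      rwa [Set.indicator_of_mem hy] at this
    -- find endpoints on both sides
    have hx₁Λ : P₀ x₁ x₁ ≠ 0 := by
      have : x₁ ∈ S₁ ∪ S₂ := Or.inl hx₁
      rw [hU] at this; exact this
    have hx₂Λ : P₀ x₂ x₂ ≠ 0 := by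
      have : x₂ ∈ S₁ ∪ S₂ := Or.inr hx₂
      rw [hU] at this; exact this
    obtain ⟨za, hzaI, hza⟩ := hexz x₁ hx₁Λ
    obtain ⟨zb, hzbI, hzb⟩ := hexz x₂ hx₂Λ
    have hmemside : ∀ z ∈ I, z ∈ S₁ ∪ S₂ := by
      intro z hz
      rw [hU]
      exact hmemΛ₀ (μ z) (hbmem z hz) z (hdiag z hz)
    have hzaS1 : za ∈ S₁ := by
      rcases hmemside za hzaI with h | h
      · exact h
      · exact absurd (hvan2 za hzaI h x₁ hx₁) hza
    have hzbS2 : zb ∈ S₂ := by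
      rcases hmemside zb hzbI with h | h
      · exact absurd (hvan1 zb hzbI h x₂ hx₂) hzb
      · exact h
    have key : ∀ b, Relation.ReflTransGen R za b → b ∈ S₁ := by
      intro b h
      induction h with
      | refl => exact hzaS1
      | @tail p q hzab hstep ih =>
        obtain ⟨hbI', hcI, x, hx⟩ := hstep
        have hμb : μ p x ≠ 0 := fun h => hx (by rw [h, zero_mul])
        have hμc : μ q x ≠ 0 := fun h => hx (by rw [h, mul_zero])
        have hxΛ : P₀ x x ≠ 0 := hmemΛ₀ _ (hbmem _ hbI') x hμb
        have hxS : x ∈ S₁ ∪ S₂ := by rw [hU]; exact hxΛ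
        have hxS1 : x ∈ S₁ := by
          rcases hxS with h | h
          · exact h
          · exact absurd (hvan1 _ hbI' ih x h) hμb
        rcases hmemside _ hcI with h | h
        · exact h
        · exact absurd (hvan2 _ hcI h x hxS1) hμc
    exact Set.disjoint_left.1 hD (key zb (hconn za hzaI zb hzbI)) hzbS2
end

section
/- If (I, {μ_z}_{z∈I}) and (J, {ν_w}_{w∈J}) are both adapted bases of 𝔥₀, then {μ_z}_{z∈I} is connected if and only if {ν_w}_{w∈J} is connected. -/
open scoped ComplexOrder

/-- Any element of the span of an adapted family is the explicit linear combination
with coefficients given by evaluation at the index points. -/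
private lemma adapted_repr {Λ : Type*} [Fintype Λ] [DecidableEq Λ]
    (J : Finset Λ) (ν : Λ → (Λ → ℂ))
    (hdiag : ∀ w ∈ J, ν w w ≠ 0)
    (hoff : ∀ w ∈ J, ∀ w' ∈ J, w' ≠ w → ν w w' = 0)
    (φ : Λ → ℂ) (hφ : φ ∈ Submodule.span ℂ (ν '' ↑J)) :
    φ = ∑ w ∈ J, (φ w / ν w w) • ν w := by
  classical
  let L : (Λ → ℂ) →ₗ[ℂ] (Λ → ℂ) :=
  { toFun := fun ψ => ∑ w ∈ J, (ψ w / ν w w) • ν w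
    map_add' := by
      intro a b
      simp [add_div, add_smul, Finset.sum_add_distrib]
    map_smul' := by
      intro c a
      simp [Finset.smul_sum, mul_div_assoc, smul_smul] }
  have key : Submodule.span ℂ (ν '' ↑J) ≤ LinearMap.eqLocus L LinearMap.id := by
    rw [Submodule.span_le]
    rintro _ ⟨u, hu, rfl⟩
    have hu' : u ∈ J := hu
    show L (ν u) = ν u
    show (∑ w ∈ J, (ν u w / ν w w) • ν w) = ν u
    rw [Finset.sum_eq_single u]
    · rw [div_self (hdiag u hu'), one_smul]
    · intro w hw hwu
      rw [hoff u hu' w hw hwu, zero_div, zero_smul]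
    · intro h; exact absurd hu' h
  have h2 : L φ = φ := key hφ
  exact h2.symm

/-- Transfer of connectedness between two adapted families with the same span. -/
private lemma connected_transfer {Λ : Type*} [Fintype Λ] [DecidableEq Λ]
    (I J : Finset Λ) (μ ν : Λ → (Λ → ℂ))
    (hspan : Submodule.span ℂ (μ '' ↑I) = Submodule.span ℂ (ν '' ↑J))
    (hdiagI : ∀ z ∈ I, μ z z ≠ 0)
    (hoffI : ∀ z ∈ I, ∀ z' ∈ I, z' ≠ z → μ z z' = 0)
    (hdiagJ : ∀ w ∈ J, ν w w ≠ 0)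
    (hoffJ : ∀ w ∈ J, ∀ w' ∈ J, w' ≠ w → ν w w' = 0)
    (hconn : FamilyConnected I μ) : FamilyConnected J ν := by
  classical
  intro w₀ hw₀ w₀' hw₀'
  by_contra hnot
  set Rν : Λ → Λ → Prop := fun a b => a ∈ J ∧ b ∈ J ∧ ∃ x, ν a x * ν b x ≠ 0 with hRν
  set J₁ : Set Λ := {u | Relation.ReflTransGen Rν w₀ u} with hJ₁
  set A₁ : Set Λ := {x | ∃ u, u ∈ J ∧ u ∈ J₁ ∧ ν u x ≠ 0} with hA₁
  set A₂ : Set Λ := {x | ∃ u, u ∈ J ∧ u ∉ J₁ ∧ ν u x ≠ 0} with hA₂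
  have hAdisj : ∀ x, x ∈ A₁ → x ∈ A₂ → False := by
    rintro x ⟨u, huJ, huJ₁, hux⟩ ⟨v, hvJ, hvJ₁, hvx⟩
    exact hvJ₁ (huJ₁.tail ⟨huJ, hvJ, x, mul_ne_zero hux hvx⟩)
  have reprν : ∀ φ ∈ Submodule.span ℂ (ν '' ↑J), φ = ∑ w ∈ J, (φ w / ν w w) • ν w :=
    fun φ h => adapted_repr J ν hdiagJ hoffJ φ h
  have reprμ : ∀ φ ∈ Submodule.span ℂ (μ '' ↑I), φ = ∑ z ∈ I, (φ z / μ z z) • μ z :=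
    fun φ h => adapted_repr I μ hdiagI hoffI φ h
  have hμmem : ∀ z ∈ I, μ z ∈ Submodule.span ℂ (ν '' ↑J) := fun z hz =>
    hspan ▸ Submodule.subset_span ⟨z, hz, rfl⟩
  have hνmem : ∀ w ∈ J, ν w ∈ Submodule.span ℂ (μ '' ↑I) := fun w hw =>
    hspan.symm ▸ Submodule.subset_span ⟨w, hw, rfl⟩
  -- dichotomy: each μ z is supported either in A₁ or in A₂
  have dich : ∀ z ∈ I, (∀ x, μ z x ≠ 0 → x ∈ A₁) ∨ (∀ x, μ z x ≠ 0 → x ∈ A₂) := by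
    intro z hz
    have hrep := reprν (μ z) (hμmem z hz)
    set d : Λ → ℂ := fun w => μ z w / ν w w with hd
    set v₁ : Λ → ℂ := ∑ w ∈ J.filter (fun w => w ∈ J₁), d w • ν w with hv₁
    set v₂ : Λ → ℂ := ∑ w ∈ J.filter (fun w => w ∉ J₁), d w • ν w with hv₂
    have hsplit : μ z = v₁ + v₂ := by
      rw [hrep]
      exact (Finset.sum_filter_add_sum_filter_not J _ _).symm
    have hv₁A : ∀ x, v₁ x ≠ 0 → x ∈ A₁ := by
      intro x hx
      rw [hv₁, Finset.sum_apply] at hx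
      obtain ⟨w, hw, hwx⟩ := Finset.exists_ne_zero_of_sum_ne_zero hx
      obtain ⟨hwJ, hwJ₁⟩ := Finset.mem_filter.mp hw
      refine ⟨w, hwJ, hwJ₁, ?_⟩
      intro h0
      apply hwx
      simp [h0]
    have hv₂A : ∀ x, v₂ x ≠ 0 → x ∈ A₂ := by
      intro x hx
      rw [hv₂, Finset.sum_apply] at hx
      obtain ⟨w, hw, hwx⟩ := Finset.exists_ne_zero_of_sum_ne_zero hx
      obtain ⟨hwJ, hwJ₁⟩ := Finset.mem_filter.mp hw
      refine ⟨w, hwJ, hwJ₁, ?_⟩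
      intro h0
      apply hwx
      simp [h0]
    have hv₁mem : v₁ ∈ Submodule.span ℂ (μ '' ↑I) := by
      rw [hspan, hv₁]
      exact Submodule.sum_mem _ fun w hw =>
        Submodule.smul_mem _ _ (Submodule.subset_span
          ⟨w, (Finset.mem_filter.mp hw).1, rfl⟩)
    have hv₁rep := reprμ v₁ hv₁mem
    have hvanish : ∀ z' ∈ I, z' ≠ z → v₁ z' = 0 := by
      intro z' hz' hne
      have hμ0 : μ z z' = 0 := hoffI z hz z' hz' hne
      have hsum : v₁ z' + v₂ z' = 0 := by
        have := congrFun hsplit z'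
        rw [hμ0] at this
        exact this.symm
      by_contra h
      have h2 : v₂ z' ≠ 0 := by
        intro h2
        rw [h2, add_zero] at hsum
        exact h hsum
      exact hAdisj z' (hv₁A z' h) (hv₂A z' h2)
    have hv₁eq : v₁ = (v₁ z / μ z z) • μ z := by
      conv_lhs => rw [hv₁rep]
      exact Finset.sum_eq_single z
        (fun z' hz' hne => by rw [hvanish z' hz' hne, zero_div, zero_smul])
        (fun h => absurd hz h)
    by_cases hc : v₁ z / μ z z = 0
    · right
      intro x hx
      have hv0 : v₁ = 0 := by rw [hv₁eq, hc, zero_smul]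
      apply hv₂A
      have : μ z x = v₂ x := by
        rw [hsplit, Pi.add_apply, hv0, Pi.zero_apply, zero_add]
      rw [← this]
      exact hx
    · left
      intro x hx
      apply hv₁A x
      have hvx : v₁ x = (v₁ z / μ z z) * μ z x := congrFun hv₁eq x
      rw [hvx]
      exact mul_ne_zero hc hx
  -- for each w ∈ J there is z ∈ I with ν w z ≠ 0
  have pick : ∀ w ∈ J, ∃ z ∈ I, ν w z ≠ 0 := by
    intro w hw
    have hrep := reprμ (ν w) (hνmem w hw)
    by_contra h
    push_neg at h
    have hzero : ν w = 0 := by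
      rw [hrep]
      apply Finset.sum_eq_zero
      intro z hz
      rw [h z hz, zero_div, zero_smul]
    exact hdiagJ w hw (by rw [hzero]; rfl)
  obtain ⟨z₁, hz₁I, hz₁⟩ := pick w₀ hw₀
  obtain ⟨z₂, hz₂I, hz₂⟩ := pick w₀' hw₀'
  have hz₁A : z₁ ∈ A₁ := ⟨w₀, hw₀, Relation.ReflTransGen.refl, hz₁⟩
  have hz₂A : z₂ ∈ A₂ := ⟨w₀', hw₀', hnot, hz₂⟩
  have hz₁d : ∀ x, μ z₁ x ≠ 0 → x ∈ A₁ := by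
    rcases dich z₁ hz₁I with h | h
    · exact h
    · exact absurd (h z₁ (hdiagI z₁ hz₁I)) (fun ha => hAdisj z₁ hz₁A ha)
  have main : ∀ b, Relation.ReflTransGen
      (fun a b => a ∈ I ∧ b ∈ I ∧ ∃ x, μ a x * μ b x ≠ 0) z₁ b →
      ∀ x, μ b x ≠ 0 → x ∈ A₁ := by
    intro b hb
    induction hb with
    | refl => exact hz₁d
    | @tail b c hab h ih =>
        obtain ⟨hbI, hcI, x, hx⟩ := h
        have hx1 : μ b x ≠ 0 := left_ne_zero_of_mul hx
        have hx2 : μ c x ≠ 0 := right_ne_zero_of_mul hx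
        have hxA : x ∈ A₁ := ih x hx1
        rcases dich c hcI with h' | h'
        · exact h'
        · exact absurd (h' x hx2) (fun h2 => hAdisj x hxA h2)
  exact hAdisj z₂ (main z₂ (hconn z₁ hz₁I z₂ hz₂I) z₂ (hdiagI z₂ hz₂I)) hz₂A

/-- Let `T` be a Hermitian positive semidefinite matrix on a nonempty finite set `Λ`
and `𝔥₀ = ker T` with `dim 𝔥₀ = D₀ ≥ 1`.  If `(I, {μ_z}_{z∈I})` and `(J, {ν_w}_{w∈J})`
are both adapted bases of `𝔥₀`, then `{μ_z}_{z∈I}` is connected iff `{ν_w}_{w∈J}` is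
connected. -/
theorem adapted_basis_connected_well_defined {Λ : Type*} [Fintype Λ] [DecidableEq Λ]
    [Nonempty Λ] (T : Matrix Λ Λ ℂ) (hT : T.PosSemidef)
    (h0 : Submodule ℂ (Λ → ℂ)) (hh0 : h0 = LinearMap.ker T.mulVecLin)
    (hD0pos : 1 ≤ Module.finrank ℂ h0)
    (I J : Finset Λ) (μ ν : Λ → (Λ → ℂ))
    (hcardI : I.card = Module.finrank ℂ h0)
    (hmemI : ∀ z ∈ I, μ z ∈ h0)
    (hliI : LinearIndependent ℂ (fun z : I => μ z))
    (hspanI : Submodule.span ℂ (μ '' ↑I) = h0)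
    (hdiagI : ∀ z ∈ I, μ z z ≠ 0)
    (hoffI : ∀ z ∈ I, ∀ z' ∈ I, z' ≠ z → μ z z' = 0)
    (hcardJ : J.card = Module.finrank ℂ h0)
    (hmemJ : ∀ w ∈ J, ν w ∈ h0)
    (hliJ : LinearIndependent ℂ (fun w : J => ν w))
    (hspanJ : Submodule.span ℂ (ν '' ↑J) = h0)
    (hdiagJ : ∀ w ∈ J, ν w w ≠ 0)
    (hoffJ : ∀ w ∈ J, ∀ w' ∈ J, w' ≠ w → ν w w' = 0) :
    FamilyConnected I μ ↔ FamilyConnected J ν := by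
  have hspan : Submodule.span ℂ (μ '' ↑I) = Submodule.span ℂ (ν '' ↑J) := by
    rw [hspanI, hspanJ]
  constructor
  · exact connected_transfer I J μ ν hspan hdiagI hoffI hdiagJ hoffJ
  · exact connected_transfer J I ν μ hspan.symm hdiagJ hoffJ hdiagI hoffI
end

section
/- The delta-chain hopping matrix T is Hermitian positive semidefinite, and T μ_z = 0 for every z ∈ ℤ/Lℤ. -/
open scoped ComplexOrder

/-- The hopping matrix of the delta chain with `L` unit cells and hopping parameter `t`.
The lattice is `Λ = (ℤ/Lℤ) ⊕ (ℤ/Lℤ)`; `Sum.inl j` is the black site `b_j` and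
`Sum.inr j` the white site `w_j`.  The entries are: on-site potentials
`T_{b_j,b_j} = T_{w_j,w_j} = t`; black-black hoppings `T_{b_j,b_{j±1}} = t/2`;
black-white hoppings `T_{b_j,w_j} = T_{b_{j+1},w_j} = t/√2` (and their transposes);
all other entries vanish. -/
noncomputable def deltaChainT (L : ℕ) (t : ℝ) :
    Matrix (ZMod L ⊕ ZMod L) (ZMod L ⊕ ZMod L) ℂ := fun p q =>
  match p, q with
  | Sum.inl j, Sum.inl k =>
      if j = k then (t : ℂ) else if k = j + 1 ∨ j = k + 1 then ((t / 2 : ℝ) : ℂ) else 0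
  | Sum.inl j, Sum.inr k =>
      if j = k ∨ j = k + 1 then ((t / Real.sqrt 2 : ℝ) : ℂ) else 0
  | Sum.inr j, Sum.inl k =>
      if k = j ∨ k = j + 1 then ((t / Real.sqrt 2 : ℝ) : ℂ) else 0
  | Sum.inr j, Sum.inr k => if j = k then (t : ℂ) else 0

/-- The localized zero-energy vector `μ_z` of the delta chain: it has value `1` at the
black site `b_z`, value `−1/√2` at the adjacent white sites `w_z` and `w_{z−1}`, and
`0` elsewhere. -/
noncomputable def deltaChainMu (L : ℕ) (z : ZMod L) : (ZMod L ⊕ ZMod L) → ℂ := fun p =>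
  match p with
  | Sum.inl j => if j = z then (1 : ℂ) else 0
  | Sum.inr j => if j = z ∨ j = z - 1 then ((-(1 / Real.sqrt 2) : ℝ) : ℂ) else 0

/-- Square-root factor of the delta-chain hopping matrix: `deltaChainT L t = Bᴴ * B`. -/
noncomputable def deltaChainB (L : ℕ) (t : ℝ) :
    Matrix (ZMod L) (ZMod L ⊕ ZMod L) ℂ := fun m p =>
  match p with
  | Sum.inl k => if k = m ∨ k = m + 1 then ((Real.sqrt t / Real.sqrt 2 : ℝ) : ℂ) else 0
  | Sum.inr k => if k = m then ((Real.sqrt t : ℝ) : ℂ) else 0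

lemma deltaChain_one_ne (L : ℕ) [NeZero L] (hL : 3 ≤ L) : (1 : ZMod L) ≠ 0 := by
  haveI : Fact (1 < L) := ⟨by omega⟩
  exact one_ne_zero

lemma deltaChain_two_ne (L : ℕ) [NeZero L] (hL : 3 ≤ L) : (2 : ZMod L) ≠ 0 := by
  intro hc
  rw [show (2 : ZMod L) = ((2 : ℕ) : ZMod L) by push_cast; ring,
    ZMod.natCast_eq_zero_iff] at hc
  have := Nat.le_of_dvd (by norm_num) hc
  omega

/-- Splitting the black-site indicator into two disjoint indicators. -/
lemma deltaChain_split (L : ℕ) [NeZero L] (hL : 3 ≤ L) (c : ℂ) (j m : ZMod L) :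
    (if j = m ∨ j = m + 1 then c else 0) =
      (if m = j then c else 0) + (if m = j - 1 then c else 0) := by
  have h1 := deltaChain_one_ne L hL
  by_cases e1 : m = j
  · subst e1
    have hne : ¬ m = m - 1 := fun h => h1 (by linear_combination h)
    rw [if_pos (Or.inl rfl), if_pos rfl, if_neg hne, add_zero]
  · by_cases e2 : m = j - 1
    · have hj : j = m + 1 := by linear_combination -e2
      have hj' : ¬ j = m := fun h => e1 h.symm
      rw [if_pos (Or.inr hj), if_neg e1, if_pos e2, zero_add]
    · have hcond : ¬ (j = m ∨ j = m + 1) := by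
        rintro (h | h)
        · exact e1 h.symm
        · exact e2 (by linear_combination -h)
      rw [if_neg hcond, if_neg e1, if_neg e2, add_zero]

lemma deltaChainT_eq (L : ℕ) [NeZero L] (hL : 3 ≤ L) (t : ℝ) (ht : 0 < t) :
    deltaChainT L t = (deltaChainB L t).conjTranspose * deltaChainB L t := by
  have h1 := deltaChain_one_ne L hL
  have h2 := deltaChain_two_ne L hL
  have hst : Real.sqrt t * Real.sqrt t = t := Real.mul_self_sqrt ht.le
  have hs2 : Real.sqrt 2 * Real.sqrt 2 = 2 := Real.mul_self_sqrt (by norm_num)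
  have haaR : (Real.sqrt t / Real.sqrt 2) * (Real.sqrt t / Real.sqrt 2) = t / 2 := by
    rw [div_mul_div_comm, hst, hs2]
  have habR : (Real.sqrt t / Real.sqrt 2) * Real.sqrt t = t / Real.sqrt 2 := by
    rw [div_mul_eq_mul_div, hst]
  have haa : ((Real.sqrt t / Real.sqrt 2 : ℝ) : ℂ) * ((Real.sqrt t / Real.sqrt 2 : ℝ) : ℂ)
      = ((t / 2 : ℝ) : ℂ) := by rw [← Complex.ofReal_mul, haaR]
  have hab : ((Real.sqrt t / Real.sqrt 2 : ℝ) : ℂ) * ((Real.sqrt t : ℝ) : ℂ)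
      = ((t / Real.sqrt 2 : ℝ) : ℂ) := by rw [← Complex.ofReal_mul, habR]
  have hba : ((Real.sqrt t : ℝ) : ℂ) * ((Real.sqrt t / Real.sqrt 2 : ℝ) : ℂ)
      = ((t / Real.sqrt 2 : ℝ) : ℂ) := by rw [mul_comm]; exact hab
  have hbb : ((Real.sqrt t : ℝ) : ℂ) * ((Real.sqrt t : ℝ) : ℂ) = ((t : ℝ) : ℂ) := by
    rw [← Complex.ofReal_mul, hst]
  funext p q
  cases p with
  | inl j =>
    cases q with
    | inl k =>
      simp only [Matrix.mul_apply, Matrix.conjTranspose_apply, deltaChainB, deltaChainT]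
      simp only [apply_ite (star : ℂ → ℂ), star_zero, Complex.star_def, Complex.conj_ofReal]
      simp only [deltaChain_split L hL]
      simp only [add_mul, mul_add, ite_mul, mul_ite, mul_zero, zero_mul, zero_add, add_zero,
        Finset.sum_add_distrib, Finset.sum_ite_eq', Finset.mem_univ, if_true, haa]
      by_cases hjk : j = k
      · have a1 : k = j := hjk.symm
        have a2 : ¬ k = j - 1 := fun h => h1 (by linear_combination h + hjk)
        have a3 : ¬ k - 1 = j := fun h => h1 (by linear_combination -hjk - h)
        have a4 : k - 1 = j - 1 := by linear_combination -hjk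
        rw [if_pos hjk, if_pos a1, if_neg a2, if_neg a3, if_pos a4, add_zero, zero_add]
        push_cast
        ring
      · have a1 : ¬ k = j := fun h => hjk h.symm
        have a4 : ¬ k - 1 = j - 1 := fun h => hjk (by linear_combination -h)
        rw [if_neg hjk, if_neg a1, if_neg a4, add_zero]
        by_cases hk1 : k = j + 1
        · have a2 : ¬ k = j - 1 := fun h => h2 (by linear_combination h - hk1)
          have a3 : k - 1 = j := by linear_combination hk1
          rw [if_pos (Or.inl hk1), if_neg a2, if_pos a3, zero_add, zero_add]
        · by_cases hk2 : j = k + 1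
          · have a2 : k = j - 1 := by linear_combination -hk2
            have a3 : ¬ k - 1 = j := fun h => h2 (by linear_combination -hk2 - h)
            rw [if_pos (Or.inr hk2), if_pos a2, if_neg a3, add_zero, zero_add]
          · have a2 : ¬ k = j - 1 := fun h => hk2 (by linear_combination -h)
            have a3 : ¬ k - 1 = j := fun h => hk1 (by linear_combination h)
            rw [if_neg (by rintro (h | h); exacts [hk1 h, hk2 h]), if_neg a2, if_neg a3,
              add_zero, add_zero]
    | inr k =>
      simp only [Matrix.mul_apply, Matrix.conjTranspose_apply, deltaChainB, deltaChainT]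
      simp only [apply_ite (star : ℂ → ℂ), star_zero, Complex.star_def, Complex.conj_ofReal]
      simp only [mul_ite, mul_zero, Finset.sum_ite_eq, Finset.sum_ite_eq',
        Finset.mem_univ, if_true]
      by_cases h : j = k ∨ j = k + 1
      · simp only [h, if_true, hab]
      · simp only [h, if_false, zero_mul]
  | inr j =>
    cases q with
    | inl k =>
      simp only [Matrix.mul_apply, Matrix.conjTranspose_apply, deltaChainB, deltaChainT]
      simp only [apply_ite (star : ℂ → ℂ), star_zero, Complex.star_def, Complex.conj_ofReal]
      simp only [ite_mul, zero_mul, Finset.sum_ite_eq, Finset.sum_ite_eq',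
        Finset.mem_univ, if_true]
      by_cases h : k = j ∨ k = j + 1
      · simp only [h, if_true, hba]
      · simp only [h, if_false, mul_zero]
    | inr k =>
      simp only [Matrix.mul_apply, Matrix.conjTranspose_apply, deltaChainB, deltaChainT]
      simp only [apply_ite (star : ℂ → ℂ), star_zero, Complex.star_def, Complex.conj_ofReal]
      simp only [ite_mul, zero_mul, Finset.sum_ite_eq, Finset.sum_ite_eq',
        Finset.mem_univ, if_true]
      by_cases h : j = k
      · have h' : k = j := h.symm
        rw [if_pos h, if_pos h', hbb]
      · have h' : ¬ k = j := fun e => h e.symm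
        rw [if_neg h, if_neg h', mul_zero]

lemma deltaChainB_mulVec (L : ℕ) [NeZero L] (hL : 3 ≤ L) (t : ℝ) (ht : 0 < t) (z : ZMod L) :
    (deltaChainB L t).mulVec (deltaChainMu L z) = 0 := by
  have h1 := deltaChain_one_ne L hL
  have hs2 : Real.sqrt 2 ≠ 0 := by positivity
  funext m
  simp only [Matrix.mulVec, dotProduct, Pi.zero_apply]
  rw [Fintype.sum_sum_type]
  simp only [deltaChainB, deltaChainMu]
  have e1 : ∀ a : ZMod L,
      (if a = m ∨ a = m + 1 then ((Real.sqrt t / Real.sqrt 2 : ℝ) : ℂ) else 0)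
        * (if a = z then (1 : ℂ) else 0)
      = if a = z then (if z = m ∨ z = m + 1 then ((Real.sqrt t / Real.sqrt 2 : ℝ) : ℂ) else 0)
          else 0 := by
    intro a
    by_cases h : a = z
    · subst h; simp
    · simp [h]
  have e2 : ∀ a : ZMod L,
      (if a = m then ((Real.sqrt t : ℝ) : ℂ) else 0)
        * (if a = z ∨ a = z - 1 then ((-(1 / Real.sqrt 2) : ℝ) : ℂ) else 0)
      = if a = m then (((Real.sqrt t : ℝ) : ℂ)
          * if m = z ∨ m = z - 1 then ((-(1 / Real.sqrt 2) : ℝ) : ℂ) else 0) else 0 := by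
    intro a
    by_cases h : a = m
    · subst h; simp
    · simp [h]
  simp only [e1, e2, Finset.sum_ite_eq', Finset.mem_univ, if_true]
  have key : ((Real.sqrt t / Real.sqrt 2 : ℝ) : ℂ)
      + ((Real.sqrt t : ℝ) : ℂ) * ((-(1 / Real.sqrt 2) : ℝ) : ℂ) = 0 := by
    push_cast
    field_simp
    ring
  by_cases c1 : m = z
  · have hz : z = m ∨ z = m + 1 := Or.inl c1.symm
    have hw : m = z ∨ m = z - 1 := Or.inl c1
    rw [if_pos hz, if_pos hw]
    exact key
  · by_cases c2 : m = z - 1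
    · have hz : z = m ∨ z = m + 1 := Or.inr (by linear_combination -c2)
      have hw : m = z ∨ m = z - 1 := Or.inr c2
      rw [if_pos hz, if_pos hw]
      exact key
    · have hz : ¬ (z = m ∨ z = m + 1) := by
        rintro (h | h)
        · exact c1 h.symm
        · exact c2 (by linear_combination -h)
      have hw : ¬ (m = z ∨ m = z - 1) := by
        rintro (h | h)
        · exact c1 h
        · exact c2 h
      rw [if_neg hz, if_neg hw, mul_zero, add_zero]

/-- The delta-chain hopping matrix `T` is Hermitian positive semidefinite, and
`T μ_z = 0` for every `z ∈ ℤ/Lℤ`. -/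
theorem deltaChain_posSemidef_and_kernel (L : ℕ) [NeZero L] (hL : 3 ≤ L)
    (t : ℝ) (ht : 0 < t) :
    (deltaChainT L t).PosSemidef ∧
    ∀ z : ZMod L, (deltaChainT L t).mulVec (deltaChainMu L z) = 0 := by
  rw [deltaChainT_eq L hL t ht]
  refine ⟨Matrix.posSemidef_conjTranspose_mul_self _, fun z => ?_⟩
  rw [← Matrix.mulVec_mulVec, deltaChainB_mulVec L hL t ht z, Matrix.mulVec_zero]
end

section
/- For the delta-chain hopping matrix T: the kernel of T has dimension exactly L; the matrix P₀ of the orthogonal projection of ℂ^Λ onto ker T satisfies (P₀)_{x,x} ≠ 0 for every site x ∈ Λ; and the matrix ((P₀)_{x,y})_{x,y∈Λ} is irreducible. -/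
open scoped ComplexOrder

section helpers

variable {L : ℕ} [NeZero L]

lemma zmod_one_ne_zero (hL : 3 ≤ L) : (1 : ZMod L) ≠ 0 := by
  intro h
  have h2 := Nat.le_of_dvd one_pos ((ZMod.natCast_eq_zero_iff 1 L).1 (by push_cast; exact h))
  omega

lemma zmod_two_ne_zero (hL : 3 ≤ L) : (2 : ZMod L) ≠ 0 := by
  intro h
  have h2 := Nat.le_of_dvd two_pos ((ZMod.natCast_eq_zero_iff 2 L).1 (by push_cast; exact h))
  omega

lemma zmod_succ_ne (hL : 3 ≤ L) (j : ZMod L) : j + 1 ≠ j := by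
  intro h
  exact zmod_one_ne_zero hL (by linear_combination h)

lemma zmod_succ_ne_pred (hL : 3 ≤ L) (j : ZMod L) : j + 1 ≠ j - 1 := by
  intro h
  exact zmod_two_ne_zero hL (by linear_combination h)

lemma zmod_ne_pred (hL : 3 ≤ L) (j : ZMod L) : j ≠ j - 1 := by
  intro h
  exact zmod_one_ne_zero hL (by linear_combination h)

end helpers

section rows

variable {L : ℕ} [NeZero L]

lemma row_inr (hL : 3 ≤ L) (t : ℝ) (v : (ZMod L ⊕ ZMod L) → ℂ) (j : ZMod L) :
    (deltaChainT L t).mulVec v (Sum.inr j)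
      = ((t / Real.sqrt 2 : ℝ) : ℂ) * (v (Sum.inl j) + v (Sum.inl (j + 1)))
        + (t : ℂ) * v (Sum.inr j) := by
  classical
  set c : ℂ := ((t / Real.sqrt 2 : ℝ) : ℂ) with hc
  have hne : j ≠ j + 1 := (zmod_succ_ne hL j).symm
  simp only [Matrix.mulVec, dotProduct, Fintype.sum_sum_type, deltaChainT]
  have h1 : ∀ k : ZMod L, (if k = j ∨ k = j + 1 then c else 0) * v (Sum.inl k)
      = (if k = j then c * v (Sum.inl k) else 0)
        + (if k = j + 1 then c * v (Sum.inl k) else 0) := by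
    intro k
    by_cases e1 : k = j
    · subst e1
      rw [if_pos (Or.inl rfl), if_pos rfl, if_neg hne]
      ring
    · by_cases e2 : k = j + 1
      · subst e2
        rw [if_pos (Or.inr rfl), if_neg e1, if_pos rfl]
        ring
      · rw [if_neg (by tauto), if_neg e1, if_neg e2]
        ring
  have h2 : ∀ k : ZMod L, (if j = k then (t : ℂ) else 0) * v (Sum.inr k)
      = (if k = j then (t : ℂ) * v (Sum.inr k) else 0) := by
    intro k
    by_cases e : k = j
    · subst e; rw [if_pos rfl, if_pos rfl]
    · rw [if_neg (fun h => e h.symm), if_neg e]; ring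
  rw [Finset.sum_congr rfl fun k _ => h1 k, Finset.sum_congr rfl fun k _ => h2 k,
    Finset.sum_add_distrib]
  simp only [Finset.sum_ite_eq', Finset.mem_univ, if_true]
  ring

lemma row_inl (hL : 3 ≤ L) (t : ℝ) (v : (ZMod L ⊕ ZMod L) → ℂ) (j : ZMod L) :
    (deltaChainT L t).mulVec v (Sum.inl j)
      = (t : ℂ) * v (Sum.inl j)
        + ((t / 2 : ℝ) : ℂ) * (v (Sum.inl (j + 1)) + v (Sum.inl (j - 1)))
        + ((t / Real.sqrt 2 : ℝ) : ℂ) * (v (Sum.inr j) + v (Sum.inr (j - 1))) := by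
  classical
  set c : ℂ := ((t / Real.sqrt 2 : ℝ) : ℂ) with hc
  set d : ℂ := ((t / 2 : ℝ) : ℂ) with hd
  have hne1 : j + 1 ≠ j := zmod_succ_ne hL j
  have hne2 : j ≠ j - 1 := zmod_ne_pred hL j
  have hne3 : j + 1 ≠ j - 1 := zmod_succ_ne_pred hL j
  simp only [Matrix.mulVec, dotProduct, Fintype.sum_sum_type, deltaChainT]
  have h1 : ∀ k : ZMod L,
      (if j = k then (t : ℂ) else if k = j + 1 ∨ j = k + 1 then d else 0) * v (Sum.inl k)
      = (if k = j then (t : ℂ) * v (Sum.inl k) else 0)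
        + (if k = j + 1 then d * v (Sum.inl k) else 0)
        + (if k = j - 1 then d * v (Sum.inl k) else 0) := by
    intro k
    by_cases e1 : k = j
    · subst e1
      rw [if_pos rfl, if_pos rfl, if_neg hne1.symm, if_neg hne2]
      ring
    · by_cases e2 : k = j + 1
      · subst e2
        rw [if_neg hne1.symm, if_pos (Or.inl rfl), if_neg hne1, if_pos rfl, if_neg hne3]
        ring
      · by_cases e3 : k = j - 1
        · subst e3
          rw [if_neg hne2, if_pos (Or.inr (by ring)), if_neg hne2.symm, if_neg hne3.symm,
            if_pos rfl]
          ring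
        · have e4 : ¬ j = k + 1 := fun h => e3 (by linear_combination -h)
          rw [if_neg (fun h => e1 h.symm), if_neg (by tauto), if_neg e1, if_neg e2, if_neg e3]
          ring
  have h2 : ∀ k : ZMod L, (if j = k ∨ j = k + 1 then c else 0) * v (Sum.inr k)
      = (if k = j then c * v (Sum.inr k) else 0)
        + (if k = j - 1 then c * v (Sum.inr k) else 0) := by
    intro k
    by_cases e1 : k = j
    · subst e1
      rw [if_pos (Or.inl rfl), if_pos rfl, if_neg hne2]
      ring
    · by_cases e2 : k = j - 1
      · subst e2
        rw [if_pos (Or.inr (by ring)), if_neg e1, if_pos rfl]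
        ring
      · have e3 : ¬ j = k + 1 := fun h => e2 (by linear_combination -h)
        rw [if_neg (by tauto), if_neg e1, if_neg e2]
        ring
  rw [Finset.sum_congr rfl fun k _ => h1 k, Finset.sum_congr rfl fun k _ => h2 k,
    Finset.sum_add_distrib, Finset.sum_add_distrib, Finset.sum_add_distrib]
  simp only [Finset.sum_ite_eq', Finset.mem_univ, if_true]
  ring

end rows


section ker

variable {L : ℕ} [NeZero L]

/-- The canonical extension of black-site amplitudes to a kernel vector. -/
noncomputable def kerExt (L : ℕ) (b : ZMod L → ℂ) : (ZMod L ⊕ ZMod L) → ℂ :=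
  Sum.elim b fun j => -(b j + b (j + 1)) / ((Real.sqrt 2 : ℝ) : ℂ)

lemma sqrt2C_ne : ((Real.sqrt 2 : ℝ) : ℂ) ≠ 0 :=
  Complex.ofReal_ne_zero.2 (ne_of_gt (Real.sqrt_pos.2 (by norm_num)))

lemma sqrt2C_sq : ((Real.sqrt 2 : ℝ) : ℂ) * ((Real.sqrt 2 : ℝ) : ℂ) = 2 := by
  rw [← Complex.ofReal_mul, Real.mul_self_sqrt (by norm_num)]
  norm_num

lemma mem_ker_iff (hL : 3 ≤ L) {t : ℝ} (ht : 0 < t) (v : (ZMod L ⊕ ZMod L) → ℂ) :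
    v ∈ LinearMap.ker (deltaChainT L t).mulVecLin ↔
      ∀ j : ZMod L, v (Sum.inr j)
        = -(v (Sum.inl j) + v (Sum.inl (j + 1))) / ((Real.sqrt 2 : ℝ) : ℂ) := by
  have htC : (t : ℂ) ≠ 0 := Complex.ofReal_ne_zero.2 (ne_of_gt ht)
  rw [LinearMap.mem_ker, Matrix.mulVecLin_apply]
  constructor
  · intro h j
    have hj := congrFun h (Sum.inr j)
    rw [row_inr hL t v j] at hj
    rw [Complex.ofReal_div] at hj
    simp only [Pi.zero_apply] at hj
    field_simp at hj
    have hj' : (v (Sum.inl j) + v (Sum.inl (j + 1)))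
        + v (Sum.inr j) * ((Real.sqrt 2 : ℝ) : ℂ) = 0 := by
      apply mul_left_cancel₀ htC
      linear_combination hj
    rw [eq_div_iff sqrt2C_ne]
    linear_combination hj'
  · intro h
    funext x
    cases x with
    | inl j =>
      rw [row_inl hL t v j, h j, h (j - 1), show j - 1 + 1 = j from by ring]
      rw [Complex.ofReal_div, Complex.ofReal_div]
      simp only [Pi.zero_apply]
      have hs := sqrt2C_sq
      set s : ℂ := ((Real.sqrt 2 : ℝ) : ℂ)
      have hinv : s⁻¹ * s⁻¹ = (1/2 : ℂ) := by rw [← mul_inv, hs]; norm_num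
      push_cast
      simp only [div_eq_mul_inv]
      linear_combination (-(t : ℂ) * (v (Sum.inl j) * 2 + v (Sum.inl (j + 1))
        + v (Sum.inl (j - 1)))) * hinv
    | inr j =>
      rw [row_inr hL t v j, h j, Complex.ofReal_div]
      simp only [Pi.zero_apply]
      field_simp
      ring

lemma kerExt_mem (hL : 3 ≤ L) {t : ℝ} (ht : 0 < t) (b : ZMod L → ℂ) :
    kerExt L b ∈ LinearMap.ker (deltaChainT L t).mulVecLin := by
  rw [mem_ker_iff hL ht]
  intro j
  rfl

lemma ker_finrank (hL : 3 ≤ L) {t : ℝ} (ht : 0 < t) :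
    Module.finrank ℂ (LinearMap.ker (deltaChainT L t).mulVecLin) = L := by
  let e : (ZMod L → ℂ) ≃ₗ[ℂ] LinearMap.ker (deltaChainT L t).mulVecLin :=
    { toFun := fun b => ⟨kerExt L b, kerExt_mem hL ht b⟩
      map_add' := by
        intro a b
        refine Subtype.ext ?_
        funext x
        cases x <;> simp [kerExt] <;> ring
      map_smul' := by
        intro c b
        refine Subtype.ext ?_
        funext x
        cases x <;> simp [kerExt] <;> ring
      invFun := fun v j => v.1 (Sum.inl j)
      left_inv := fun b => rfl
      right_inv := by
        intro v
        refine Subtype.ext ?_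
        funext x
        cases x with
        | inl j => rfl
        | inr j => exact (((mem_ker_iff hL ht v.1).1 v.2) j).symm }
  rw [← LinearEquiv.finrank_eq e, Module.finrank_fintype_fun_eq_card, ZMod.card]

end ker

/-- For the delta-chain hopping matrix `T`: the kernel of `T` has dimension exactly `L`;
the matrix `P₀` of the orthogonal projection of `ℂ^Λ` onto `ker T` (characterized by:
Hermitian, idempotent, maps everything into `ker T`, and fixes `ker T`) has all diagonal
entries nonzero; and the matrix `((P₀)_{x,y})_{x,y∈Λ}` is irreducible. -/
theorem deltaChain_flatBand_irreducible (L : ℕ) [NeZero L] (hL : 3 ≤ L)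
    (t : ℝ) (ht : 0 < t)
    (P₀ : Matrix (ZMod L ⊕ ZMod L) (ZMod L ⊕ ZMod L) ℂ)
    (hH : P₀.conjTranspose = P₀) (hPP : P₀ * P₀ = P₀)
    (hmem : ∀ v : (ZMod L ⊕ ZMod L) → ℂ,
      P₀.mulVec v ∈ LinearMap.ker (deltaChainT L t).mulVecLin)
    (hfix : ∀ v ∈ LinearMap.ker (deltaChainT L t).mulVecLin, P₀.mulVec v = v) :
    Module.finrank ℂ (LinearMap.ker (deltaChainT L t).mulVecLin) = L ∧
    (∀ x : ZMod L ⊕ ZMod L, P₀ x x ≠ 0) ∧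
    ¬ MatrixReducibleOn (Set.univ : Set (ZMod L ⊕ ZMod L)) P₀ := by
  classical
  -- transpose relation from Hermiticity
  have hherm : ∀ a b : ZMod L ⊕ ZMod L, P₀ b a = (starRingEnd ℂ) (P₀ a b) := by
    intro a b
    have h1 : P₀.conjTranspose a b = P₀ a b := by rw [hH]
    rw [Matrix.conjTranspose_apply] at h1
    rw [starRingEnd_apply, ← h1, star_star]
  -- the delta vectors in the kernel
  set s : ℂ := ((Real.sqrt 2 : ℝ) : ℂ) with hs
  have hsne : s ≠ 0 := sqrt2C_ne
  have hdelta : ∀ k : ZMod L,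
      kerExt L (fun i => if i = k then (1 : ℂ) else 0)
        ∈ LinearMap.ker (deltaChainT L t).mulVecLin :=
    fun k => kerExt_mem hL ht _
  have hdinl : ∀ k i : ZMod L,
      kerExt L (fun i => if i = k then (1 : ℂ) else 0) (Sum.inl i)
        = if i = k then 1 else 0 := fun k i => rfl
  have hdinr : ∀ k : ZMod L,
      kerExt L (fun i => if i = k then (1 : ℂ) else 0) (Sum.inr k) = -1 / s := by
    intro k
    show -((if k = k then (1:ℂ) else 0) + (if k + 1 = k then (1:ℂ) else 0)) / s = -1 / s
    rw [if_pos rfl, if_neg (zmod_succ_ne hL k)]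
    ring_nf
  have hdinr' : ∀ k : ZMod L,
      kerExt L (fun i => if i = k + 1 then (1 : ℂ) else 0) (Sum.inr k) = -1 / s := by
    intro k
    show -((if k = k + 1 then (1:ℂ) else 0) + (if k + 1 = k + 1 then (1:ℂ) else 0)) / s
      = -1 / s
    rw [if_pos rfl, if_neg (zmod_succ_ne hL k).symm]
    ring_nf
  refine ⟨ker_finrank hL ht, ?_, ?_⟩
  · -- nonzero diagonal
    intro x hx0
    -- the whole row of `P₀` at `x` vanishes
    have hrow : ∀ y, P₀ x y = 0 := by
      have hxx : P₀ x x = ∑ y, ((Complex.normSq (P₀ x y) : ℝ) : ℂ) := by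
        conv_lhs => rw [← hPP]
        rw [Matrix.mul_apply]
        refine Finset.sum_congr rfl fun y _ => ?_
        rw [hherm x y, Complex.mul_conj]
      rw [hx0] at hxx
      have hsum : ∑ y, Complex.normSq (P₀ x y) = 0 := by
        have := hxx.symm
        rw [← Complex.ofReal_sum] at this
        exact_mod_cast this
      intro y
      have hy := (Finset.sum_eq_zero_iff_of_nonneg
        (fun y _ => Complex.normSq_nonneg (P₀ x y))).1 hsum y (Finset.mem_univ y)
      exact Complex.normSq_eq_zero.1 hy
    -- but some kernel vector does not vanish at `x`
    obtain ⟨k, hk⟩ : ∃ k : ZMod L, (x = Sum.inl k ∨ x = Sum.inr k) := by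
      cases x with
      | inl k => exact ⟨k, Or.inl rfl⟩
      | inr k => exact ⟨k, Or.inr rfl⟩
    have hvx : kerExt L (fun i => if i = k then (1 : ℂ) else 0) x = 0 := by
      rw [← congrFun (hfix _ (hdelta k)) x]
      show ∑ y, P₀ x y * kerExt L (fun i => if i = k then (1 : ℂ) else 0) y = 0
      exact Finset.sum_eq_zero fun y _ => by rw [hrow y, zero_mul]
    rcases hk with hk | hk
    · rw [hk, hdinl k k, if_pos rfl] at hvx
      exact one_ne_zero hvx
    · rw [hk, hdinr k] at hvx
      exact div_ne_zero (by norm_num) hsne hvx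
  · -- irreducibility
    rintro ⟨S₁, S₂, hU, hD, ⟨a, ha⟩, ⟨b2, hb2⟩, h0⟩
    have hcompl : ∀ y, y ∉ S₁ → y ∈ S₂ := by
      intro y hy
      have : y ∈ S₁ ∪ S₂ := hU ▸ Set.mem_univ y
      rw [Set.mem_union] at this
      tauto
    have h0' : ∀ x ∈ S₂, ∀ y ∈ S₁, P₀ x y = 0 := by
      intro x hx y hy
      rw [hherm y x, h0 y hy x hx, map_zero]
    -- restriction of a kernel vector to `S₁` stays in the kernel
    have hind : ∀ v ∈ LinearMap.ker (deltaChainT L t).mulVecLin,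
        (fun x => if x ∈ S₁ then v x else 0) ∈ LinearMap.ker (deltaChainT L t).mulVecLin := by
      intro v hv
      set u : (ZMod L ⊕ ZMod L) → ℂ := fun x => if x ∈ S₁ then v x else 0 with hu
      have hPu : P₀.mulVec u = u := by
        funext x
        by_cases hx : x ∈ S₁
        · have h1 : ∀ y, P₀ x y * u y = P₀ x y * v y := by
            intro y
            by_cases hy : y ∈ S₁
            · simp [hu, hy]
            · rw [h0 x hx y (hcompl y hy), zero_mul, zero_mul]
          calc P₀.mulVec u x = ∑ y, P₀ x y * u y := rfl
            _ = ∑ y, P₀ x y * v y := Finset.sum_congr rfl fun y _ => h1 y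
            _ = P₀.mulVec v x := rfl
            _ = v x := congrFun (hfix v hv) x
            _ = u x := by simp [hu, hx]
        · have h1 : ∀ y, P₀ x y * u y = 0 := by
            intro y
            by_cases hy : y ∈ S₁
            · rw [h0' x (hcompl x hx) y hy, zero_mul]
            · simp [hu, hy]
          calc P₀.mulVec u x = ∑ y, P₀ x y * u y := rfl
            _ = 0 := Finset.sum_eq_zero fun y _ => h1 y
            _ = u x := by simp [hu, hx]
      rw [← hPu]
      exact hmem u
    -- propagation along the chain
    have hne1s : (-1 : ℂ) / s ≠ 0 := div_ne_zero (by norm_num) hsne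
    have hA : ∀ k : ZMod L, Sum.inl k ∈ S₁ → Sum.inr k ∈ S₁ := by
      intro k hk
      by_contra hw
      have hrel := ((mem_ker_iff hL ht _).1 (hind _ (hdelta k))) k
      rw [if_neg hw, if_pos hk, hdinl k k, if_pos rfl,
        hdinl k (k + 1), if_neg (zmod_succ_ne hL k)] at hrel
      simp only [ite_self] at hrel
      apply hne1s
      rw [hs]
      linear_combination (-1 : ℂ) * hrel
    have hB : ∀ k : ZMod L, Sum.inr k ∈ S₁ → Sum.inl k ∈ S₁ := by
      intro k hk
      by_contra hb
      have hrel := ((mem_ker_iff hL ht _).1 (hind _ (hdelta k))) k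
      rw [if_pos hk, hdinr k, if_neg hb,
        hdinl k (k + 1), if_neg (zmod_succ_ne hL k)] at hrel
      simp only [ite_self] at hrel
      apply hne1s
      rw [hs]
      linear_combination hrel
    have hC : ∀ k : ZMod L, Sum.inr k ∈ S₁ → Sum.inl (k + 1) ∈ S₁ := by
      intro k hk
      by_contra hb
      have hrel := ((mem_ker_iff hL ht _).1 (hind _ (hdelta (k + 1)))) k
      rw [if_pos hk, hdinr' k, if_neg hb,
        hdinl (k + 1) k, if_neg (zmod_succ_ne hL k).symm] at hrel
      simp only [ite_self] at hrel
      apply hne1s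
      rw [hs]
      linear_combination hrel
    have hstep : ∀ k : ZMod L, Sum.inl k ∈ S₁ → Sum.inl (k + 1) ∈ S₁ :=
      fun k h => hC k (hA k h)
    obtain ⟨k0, hk0⟩ : ∃ k0 : ZMod L, Sum.inl k0 ∈ S₁ := by
      cases a with
      | inl k => exact ⟨k, ha⟩
      | inr k => exact ⟨k, hB k ha⟩
    have hall : ∀ n : ℕ, Sum.inl (k0 + (n : ZMod L)) ∈ S₁ := by
      intro n
      induction n with
      | zero => simpa using hk0
      | succ n ih =>
        have := hstep _ ih
        have harith : k0 + ((n : ZMod L) + 1) = k0 + (n : ZMod L) + 1 := by ring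
        rw [show ((n + 1 : ℕ) : ZMod L) = (n : ZMod L) + 1 from by push_cast; ring, harith]
        exact this
    have hallL : ∀ j : ZMod L, Sum.inl j ∈ S₁ := by
      intro j
      have := hall (j - k0).val
      rwa [ZMod.natCast_zmod_val, show k0 + (j - k0) = j from by ring] at this
    have hallS : b2 ∈ S₁ := by
      cases b2 with
      | inl j => exact hallL j
      | inr j => exact hA j (hallL j)
    exact Set.disjoint_left.1 hD hallS hb2
end
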